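/- arXiv:1908.10491 — 3 statements merged into one kernel-verified Lean document; each statement's English description precedes it below -/
import Mathlib

section
/- Let n ≥ 4 and suppose the chordless cycle C_n has an IP-SEG model with exactly two interval arcs and exactly two permutation arcs. Then each of the two permutation arcs consists of at most two segments. -/
/-- A segment between the horizontal lines `L₁ = {y = 1}` and `L₂ = {y = 2}`,
given by its two endpoints, each of which lies on `L₁` or `L₂`. -/
structure IPSeg where
  p : ℝ × ℝ
  q : ℝ × ℝ
  hp : p.2 = 1 ∨ p.2 = 2
  hq : q.2 = 1 ∨ q.2 = 2

namespace IPSeg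

/-- The closed line segment in `ℝ²` determined by the two endpoints. -/
def carrier (s : IPSeg) : Set (ℝ × ℝ) := segment ℝ s.p s.q

/-- An interval segment: both endpoints on the same horizontal line. -/
def IsInterval (s : IPSeg) : Prop := s.p.2 = s.q.2

/-- A permutation segment: one endpoint on each horizontal line. -/
def IsPermutation (s : IPSeg) : Prop := s.p.2 ≠ s.q.2

/-- The (set of) endpoints of the segment. -/
def endpoints (s : IPSeg) : Set (ℝ × ℝ) := {s.p, s.q}

end IPSeg

/-- An IP-SEG model of a graph: distinct vertices are adjacent iff their segments meet. -/
def IsIPSEGModel {V : Type*} (G : SimpleGraph V) (s : V → IPSeg) : Prop :=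
  ∀ u v : V, u ≠ v → (G.Adj u v ↔ ((s u).carrier ∩ (s v).carrier).Nonempty)

/-- An IP-SEG* model: an IP-SEG model in which all interval segments lie on one line. -/
def IsIPSEGStarModel {V : Type*} (G : SimpleGraph V) (s : V → IPSeg) : Prop :=
  IsIPSEGModel G s ∧
    ∃ c : ℝ, (c = 1 ∨ c = 2) ∧ ∀ v : V, (s v).IsInterval → (s v).p.2 = c

/-- The chordless cycle `C_n` on vertex set `ZMod n`, with edges exactly
`v — v + 1` (indices modulo `n`). -/
def CycleGraph (n : ℕ) : SimpleGraph (ZMod n) :=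
  SimpleGraph.fromRel (fun u v => v = u + 1)

/-- `v` is the start of an interval arc: `v` is assigned an interval segment but its
cyclic predecessor is not. -/
def IntArcStart (n : ℕ) (s : ZMod n → IPSeg) (v : ZMod n) : Prop :=
  (s v).IsInterval ∧ ¬ (s (v - 1)).IsInterval

/-- The interval arc starting at `v` has length `l`: the `l` consecutive vertices
`v, v+1, …, v+l-1` carry interval segments and `v + l` does not. -/
def IntArcLen (n : ℕ) (s : ZMod n → IPSeg) (v : ZMod n) (l : ℕ) : Prop :=
  (∀ k : ℕ, k < l → (s (v + (k : ZMod n))).IsInterval) ∧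
    ¬ (s (v + (l : ZMod n))).IsInterval

/-- `v` is the start of a permutation arc. -/
def PermArcStart (n : ℕ) (s : ZMod n → IPSeg) (v : ZMod n) : Prop :=
  (s v).IsPermutation ∧ ¬ (s (v - 1)).IsPermutation

/-- The permutation arc starting at `v` has length `l`. -/
def PermArcLen (n : ℕ) (s : ZMod n → IPSeg) (v : ZMod n) (l : ℕ) : Prop :=
  (∀ k : ℕ, k < l → (s (v + (k : ZMod n))).IsPermutation) ∧
    ¬ (s (v + (l : ZMod n))).IsPermutation

namespace IPGeo
open IPSeg

/-- bottom coordinate of a permutation segment -/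
noncomputable def bot (s : IPSeg) : ℝ := if s.p.2 = 1 then s.p.1 else s.q.1
/-- top coordinate of a permutation segment -/
noncomputable def top (s : IPSeg) : ℝ := if s.p.2 = 2 then s.p.1 else s.q.1

lemma perm_carrier {s : IPSeg} (h : s.IsPermutation) :
    s.carrier = segment ℝ (bot s, 1) (top s, 2) := by
  rcases s.hp with h1 | h1 <;> rcases s.hq with h2 | h2
  · exact absurd (h1.trans h2.symm) h
  · have hb : ((bot s : ℝ), (1:ℝ)) = s.p := by
      rw [show bot s = s.p.1 from by simp [bot, h1], ← h1]
    have h5 : ¬ s.p.2 = 2 := by rw [h1]; norm_num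
    have ht : ((top s : ℝ), (2:ℝ)) = s.q := by
      rw [show top s = s.q.1 from by simp [top, h5], ← h2]
    rw [IPSeg.carrier, hb, ht]
  · have h5 : ¬ s.p.2 = 1 := by rw [h1]; norm_num
    have hb : ((bot s : ℝ), (1:ℝ)) = s.q := by
      rw [show bot s = s.q.1 from by simp [bot, h5], ← h2]
    have ht : ((top s : ℝ), (2:ℝ)) = s.p := by
      rw [show top s = s.p.1 from by simp [top, h1], ← h1]
    rw [IPSeg.carrier, hb, ht, segment_symm]
  · exact absurd (h1.trans h2.symm) h

lemma mem_segment_iff {x y z : ℝ × ℝ} :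
    z ∈ segment ℝ x y ↔ ∃ a b : ℝ, 0 ≤ a ∧ 0 ≤ b ∧ a + b = 1 ∧
      a * x.1 + b * y.1 = z.1 ∧ a * x.2 + b * y.2 = z.2 := by
  constructor
  · rintro ⟨a, b, ha, hb, hab, hz⟩
    exact ⟨a, b, ha, hb, hab, by rw [← hz]; rfl, by rw [← hz]; rfl⟩
  · rintro ⟨a, b, ha, hb, hab, h1, h2⟩
    exact ⟨a, b, ha, hb, hab, Prod.ext h1 h2⟩

/-- membership in a permutation-type segment parametrized by height -/
lemma mem_perm_carrier {s : IPSeg} (h : s.IsPermutation) {z : ℝ × ℝ} :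
    z ∈ s.carrier ↔ ∃ θ : ℝ, 0 ≤ θ ∧ θ ≤ 1 ∧
      z = ((1-θ) * bot s + θ * top s, 1 + θ) := by
  rw [perm_carrier h, mem_segment_iff]
  constructor
  · rintro ⟨a, b, ha, hb, hab, h1, h2⟩
    refine ⟨b, hb, by linarith, ?_⟩
    have : a = 1 - b := by linarith
    subst this
    ext <;> simp at h1 h2 ⊢ <;> linarith
  · rintro ⟨θ, h0, h1, rfl⟩
    exact ⟨1-θ, θ, by linarith, h0, by ring, by ring_nf, by norm_num; ring⟩

lemma strip {s : IPSeg} {z : ℝ × ℝ} (hz : z ∈ s.carrier) : 1 ≤ z.2 ∧ z.2 ≤ 2 := by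
  rw [IPSeg.carrier, mem_segment_iff] at hz
  obtain ⟨a, b, ha, hb, hab, -, h2⟩ := hz
  rcases s.hp with h3 | h3 <;> rcases s.hq with h4 | h4 <;>
    rw [h3, h4] at h2 <;> constructor <;> nlinarith

lemma perm_at_height_one {s : IPSeg} (h : s.IsPermutation) {z : ℝ × ℝ}
    (hz : z ∈ s.carrier) (h1 : z.2 = 1) : z = (bot s, 1) := by
  rw [mem_perm_carrier h] at hz
  obtain ⟨θ, h0, hθ, rfl⟩ := hz
  simp at h1 ⊢
  constructor
  · rw [h1]; ring
  · exact h1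

lemma perm_at_height_two {s : IPSeg} (h : s.IsPermutation) {z : ℝ × ℝ}
    (hz : z ∈ s.carrier) (h1 : z.2 = 2) : z = (top s, 2) := by
  rw [mem_perm_carrier h] at hz
  obtain ⟨θ, h0, hθ, rfl⟩ := hz
  simp at h1 ⊢
  constructor
  · rw [show θ = 1 by linarith]; ring
  · linarith

lemma bot_mem {s : IPSeg} (h : s.IsPermutation) : ((bot s : ℝ), (1:ℝ)) ∈ s.carrier := by
  rw [perm_carrier h]; exact left_mem_segment _ _ _

lemma top_mem {s : IPSeg} (h : s.IsPermutation) : ((top s : ℝ), (2:ℝ)) ∈ s.carrier := by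
  rw [perm_carrier h]; exact right_mem_segment _ _ _

/-- two permutation segments meet iff the crossing product is ≤ 0 -/
lemma perm_perm_meet {s t : IPSeg} (hs : s.IsPermutation) (ht : t.IsPermutation) :
    (s.carrier ∩ t.carrier).Nonempty ↔ (bot s - bot t) * (top s - top t) ≤ 0 := by
  constructor
  · rintro ⟨z, hzs, hzt⟩
    rw [mem_perm_carrier hs] at hzs
    rw [mem_perm_carrier ht] at hzt
    obtain ⟨θ, h0, h1, rfl⟩ := hzs
    obtain ⟨θ', h0', h1', he⟩ := hzt
    have hθ : θ' = θ := by
      have := congrArg Prod.snd he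
      simp at this; linarith
    subst hθ
    have hx := congrArg Prod.fst he
    simp only at hx
    set D := bot s - bot t with hD
    set E := top s - top t with hE
    have hlin : (1-θ') * D + θ' * E = 0 := by rw [hD, hE]; linear_combination hx
    have h2 : D * E = -((1-θ') * D^2) - θ' * E^2 := by linear_combination (D + E) * hlin
    nlinarith [mul_nonneg (by linarith : (0:ℝ) ≤ 1-θ') (sq_nonneg D),
      mul_nonneg h0' (sq_nonneg E)]
  · intro hprod
    set D := bot s - bot t with hD
    set E := top s - top t with hE
    have key : ∃ θ : ℝ, 0 ≤ θ ∧ θ ≤ 1 ∧ (1-θ) * D + θ * E = 0 := by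
      rcases eq_or_ne D 0 with h | h
      · exact ⟨0, le_refl _, by norm_num, by rw [h]; ring⟩
      rcases eq_or_ne E 0 with h' | h'
      · exact ⟨1, by norm_num, le_refl _, by rw [h']; ring⟩
      have hDE : D * E < 0 := lt_of_le_of_ne hprod (by
        intro hc; rcases mul_eq_zero.1 hc with h0 | h0 <;> tauto)
      rcases lt_or_gt_of_ne h with hneg | hpos
      · have hE : 0 < E := by nlinarith
        have h2 : D - E < 0 := by linarith
        have hne : D - E ≠ 0 := ne_of_lt h2
        refine ⟨D / (D - E), ?_, ?_, by field_simp; ring⟩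
        · rw [div_nonneg_iff]; right; constructor <;> linarith
        · rw [div_le_one_iff]; right; right; exact ⟨h2, by linarith⟩
      · have hE : E < 0 := by nlinarith
        have h2 : 0 < D - E := by linarith
        have hne : D - E ≠ 0 := ne_of_gt h2
        refine ⟨D / (D - E), ?_, ?_, by field_simp; ring⟩
        · positivity
        · rw [div_le_one h2]; linarith
    obtain ⟨θ, h0, h1, hθ⟩ := key
    refine ⟨((1-θ) * bot s + θ * top s, 1 + θ), ?_, ?_⟩
    · rw [mem_perm_carrier hs]; exact ⟨θ, h0, h1, rfl⟩
    · rw [mem_perm_carrier ht]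
      refine ⟨θ, h0, h1, ?_⟩
      ext
      · simp only [hD, hE] at hθ ⊢; ring_nf; ring_nf at hθ; linarith
      · rfl

/-- membership in an interval-type segment -/
lemma mem_int_carrier {s : IPSeg} (h : s.IsInterval) {z : ℝ × ℝ} :
    z ∈ s.carrier ↔ z.2 = s.p.2 ∧ z.1 ∈ Set.uIcc s.p.1 s.q.1 := by
  rw [IPSeg.carrier, mem_segment_iff]
  constructor
  · rintro ⟨a, b, ha, hb, hab, h1, h2⟩
    have hq2 : s.q.2 = s.p.2 := h.symm
    rw [hq2] at h2
    constructor
    · linear_combination h2.symm + s.p.2 * hab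
    · rw [← segment_eq_uIcc]
      exact ⟨a, b, ha, hb, hab, by simpa using h1⟩
  · rintro ⟨hz2, hz1⟩
    rw [← segment_eq_uIcc] at hz1
    obtain ⟨a, b, ha, hb, hab, h1⟩ := hz1
    simp only [smul_eq_mul] at h1
    refine ⟨a, b, ha, hb, hab, h1, ?_⟩
    rw [hz2, ← h]
    linear_combination s.p.2 * hab


/-- intersecting interval segments lie on the same line -/
lemma int_int_line {s t : IPSeg} (hs : s.IsInterval) (ht : t.IsInterval)
    (h : (s.carrier ∩ t.carrier).Nonempty) : s.p.2 = t.p.2 := by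
  obtain ⟨z, hz1, hz2⟩ := h
  rw [mem_int_carrier hs] at hz1
  rw [mem_int_carrier ht] at hz2
  rw [← hz1.1, ← hz2.1]

/-- the x-coordinate of the line through `(p,1)` and `(q,2)` at height `y` -/
noncomputable def lineAt (p q y : ℝ) : ℝ := p + (q - p) * (y - 1)

lemma lineAt_one (p q : ℝ) : lineAt p q 1 = p := by simp [lineAt]
lemma lineAt_two (p q : ℝ) : lineAt p q 2 = q := by simp [lineAt]; ring

lemma line_mem (p q : ℝ) {y : ℝ} (h1 : 1 ≤ y) (h2 : y ≤ 2) :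
    ((lineAt p q y, y) : ℝ × ℝ) ∈ segment ℝ ((p, 1) : ℝ × ℝ) (q, 2) := by
  rw [mem_segment_iff]
  exact ⟨2 - y, y - 1, by linarith, by linarith, by ring, by simp [lineAt]; ring, by simp; ring⟩

lemma side_dichotomy {u : IPSeg} (hu : u.IsPermutation) (S : IPSeg)
    (hdisj : ∀ z ∈ S.carrier, z ∉ u.carrier) :
    (∀ z ∈ S.carrier, z.1 < lineAt (bot u) (top u) z.2) ∨
    (∀ z ∈ S.carrier, lineAt (bot u) (top u) z.2 < z.1) := by
  set g : ℝ × ℝ → ℝ := fun z => z.1 - lineAt (bot u) (top u) z.2 with hg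
  have hcont : Continuous g := by
    simp only [hg, lineAt]
    fun_prop
  have hne : ∀ z ∈ S.carrier, g z ≠ 0 := by
    intro z hz h0
    have hz2 := strip hz
    have hmem : z ∈ u.carrier := by
      rw [perm_carrier hu]
      have : z = (lineAt (bot u) (top u) z.2, z.2) := by
        have : z.1 = lineAt (bot u) (top u) z.2 := by simp [hg] at h0; linarith
        rw [← this]
      rw [this]
      exact line_mem _ _ hz2.1 hz2.2
    exact hdisj z hz hmem
  by_contra hcon
  push_neg at hcon
  obtain ⟨⟨z1, hz1, hge⟩, ⟨z2, hz2, hle⟩⟩ := hcon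
  have hconn : IsPreconnected S.carrier := (convex_segment _ _).isPreconnected
  obtain ⟨x, hx, hx0⟩ := hconn.intermediate_value₂ hz2 hz1
    (hcont.continuousOn) (continuousOn_const (c := (0:ℝ)))
    (by simp [hg]; linarith) (by simp [hg]; linarith)
  exact hne x hx hx0

lemma hull_chain (J : ℕ → IPSeg) : ∀ (ℓ : ℕ), 0 < ℓ →
    (∀ r < ℓ, (J r).IsInterval) →
    (∀ r : ℕ, r + 1 < ℓ → ((J r).carrier ∩ (J (r+1)).carrier).Nonempty) →
    ∀ y x0 xl : ℝ, x0 ∈ Set.uIcc (J 0).p.1 (J 0).q.1 →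
      xl ∈ Set.uIcc (J (ℓ-1)).p.1 (J (ℓ-1)).q.1 →
      y ∈ Set.uIcc x0 xl → ∃ r < ℓ, y ∈ Set.uIcc (J r).p.1 (J r).q.1 := by
  intro ℓ
  induction ℓ with
  | zero => omega
  | succ ℓ ih =>
    intro _ hints hmeets y x0 xl hx0 hxl hy
    rcases Nat.eq_zero_or_pos ℓ with rfl | hℓ
    · exact ⟨0, Nat.zero_lt_one, Set.uIcc_subset_uIcc hx0 (by simpa using hxl) hy⟩
    · obtain ⟨z, hz1, hz2⟩ := hmeets (ℓ-1) (by omega)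
      rw [mem_int_carrier (hints (ℓ-1) (by omega))] at hz1
      rw [show ℓ - 1 + 1 = ℓ by omega] at hz2
      rw [mem_int_carrier (hints ℓ (by omega))] at hz2
      have hsub := Set.uIcc_subset_uIcc_union_uIcc (a := x0) (b := z.1) (c := xl)
      rcases hsub hy with hy' | hy'
      · obtain ⟨r, hr, hmem⟩ := ih hℓ (fun r hr => hints r (by omega))
          (fun r hr => hmeets r (by omega)) y x0 z.1 hx0 hz1.2 hy'
        exact ⟨r, by omega, hmem⟩
      · exact ⟨ℓ, by omega, Set.uIcc_subset_uIcc hz2.2 (by simpa using hxl) hy'⟩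


lemma int_of_not_perm {s : IPSeg} (h : ¬ s.IsPermutation) : s.IsInterval := not_not.mp h

lemma perm_int_attach {u w : IPSeg} (hu : u.IsPermutation) (hw : w.IsInterval)
    (h : (u.carrier ∩ w.carrier).Nonempty) :
    (w.p.2 = 1 → bot u ∈ Set.uIcc w.p.1 w.q.1) ∧
    (w.p.2 = 2 → top u ∈ Set.uIcc w.p.1 w.q.1) := by
  obtain ⟨z, hz1, hz2⟩ := h
  rw [mem_int_carrier hw] at hz2
  constructor
  · intro h1
    have hze := perm_at_height_one hu hz1 (by rw [hz2.1, h1])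
    have hz : z.1 = bot u := by rw [hze]
    exact hz ▸ hz2.2
  · intro h2
    have hze := perm_at_height_two hu hz1 (by rw [hz2.1, h2])
    have hz : z.1 = top u := by rw [hze]
    exact hz ▸ hz2.2

lemma mem_uIcc_lt {x a b c : ℝ} (h : x ∈ Set.uIcc a b) (ha : a < c) (hb : b < c) : x < c := by
  rcases Set.mem_uIcc.1 h with ⟨h1, h2⟩ | ⟨h1, h2⟩ <;> linarith

lemma mem_uIcc_gt {x a b c : ℝ} (h : x ∈ Set.uIcc a b) (ha : c < a) (hb : c < b) : c < x := by
  rcases Set.mem_uIcc.1 h with ⟨h1, h2⟩ | ⟨h1, h2⟩ <;> linarith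
end IPGeo

namespace IPCore

lemma neg_mem_uIcc {x a b : ℝ} : -x ∈ Set.uIcc (-a) (-b) ↔ x ∈ Set.uIcc a b := by
  simp [Set.mem_uIcc]; tauto

lemma coreMismatch (p q b0 t0 b2 t2 : ℝ) (h0 : b0 < p) (h2 : t2 < q)
    (cross01 : (b0-p)*(t0-q) ≤ 0) (cross12 : (b2-p)*(t2-q) ≤ 0)
    (disj02 : 0 < (b0-b2)*(t0-t2)) : False := by
  have ht0 : q ≤ t0 := by nlinarith
  have hb2 : p ≤ b2 := by nlinarith
  nlinarith

lemma coreMatched (p q b0 t0 b2 t2 c d : ℝ)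
    (h0 : b0 < p) (h2 : b2 < p)
    (cross01 : (b0-p)*(t0-q) ≤ 0) (cross12 : (b2-p)*(t2-q) ≤ 0)
    (hc : c < p) (hd : d < q)
    (disj0c : 0 < (b0-c)*(t0-d)) (disj2c : 0 < (b2-c)*(t2-d))
    (hullA : b2 ∉ Set.uIcc b0 c)
    (branch : (∃ e f, e < p ∧ f < q ∧ 0 < (b0-e)*(t0-f) ∧ b0 ∉ Set.uIcc b2 e) ∨
              (∃ b3 t3, b3 < p ∧ t3 < q ∧ 0 < (b0-b3)*(t0-t3) ∧ (b2-b3)*(t2-t3) ≤ 0)) :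
    False := by
  have ht0 : q ≤ t0 := by nlinarith
  have ht2 : q ≤ t2 := by nlinarith
  have hcb0 : c < b0 := by nlinarith
  have hcb2 : c < b2 := by nlinarith
  have hb02 : b0 < b2 := by
    by_contra hcon
    push_neg at hcon
    exact hullA (Set.mem_uIcc.2 (Or.inr ⟨le_of_lt hcb2, hcon⟩))
  rcases branch with ⟨e, f, he, hf, disj0e, hullB⟩ | ⟨b3, t3, h3, h3', disj03, cross23⟩
  · have heb0 : e < b0 := by nlinarith
    exact hullB (Set.mem_uIcc.2 (Or.inr ⟨le_of_lt heb0, le_of_lt hb02⟩))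
  · have h3b0 : b3 < b0 := by nlinarith
    nlinarith

lemma neg_prod_eq (a b c d : ℝ) : ((-a)-(-b))*((-c)-(-d)) = (a-b)*(c-d) := by ring

lemma comm_prod_le {a b c d : ℝ} (h : (a-b)*(c-d) ≤ 0) : (c-d)*(a-b) ≤ 0 := by
  rw [mul_comm]; exact h

lemma comm_prod_lt {a b c d : ℝ} (h : 0 < (a-b)*(c-d)) : 0 < (c-d)*(a-b) := by
  rw [mul_comm]; exact h

lemma assembled (P Q B0 T0 B2 T2 Bx Tx : ℝ)
    (f1 : (B0-P)*(T0-Q) ≤ 0) (f2 : (B2-P)*(T2-Q) ≤ 0)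
    (f3 : 0 < (B0-B2)*(T0-T2))
    (f4 : Bx < P) (f4' : Tx < Q)
    (f6 : 0 < (B0-Bx)*(T0-Tx)) (f7 : 0 < (B2-Bx)*(T2-Tx))
    (hA : (B0 < P ∧ B2 ∉ Set.uIcc B0 Bx) ∨ (T0 < Q ∧ T2 ∉ Set.uIcc T0 Tx))
    (hbranch :
      (∃ Be Te, Be < P ∧ Te < Q ∧ 0 < (B0-Be)*(T0-Te) ∧
        ((B2 < P ∧ B0 ∉ Set.uIcc B2 Be) ∨ (T2 < Q ∧ T0 ∉ Set.uIcc T2 Te))) ∨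
      (∃ B3 T3, B3 < P ∧ T3 < Q ∧ 0 < (B0-B3)*(T0-T3) ∧ (B2-B3)*(T2-T3) ≤ 0)) :
    False := by
  rcases hA with ⟨h0, hullA⟩ | ⟨h0, hullA⟩
  · -- interval arc A attaches on the bottom line
    rcases hbranch with ⟨Be, Te, he, hf, d0e, hB⟩ | ⟨B3, T3, h3, h3', d03, c23⟩
    · rcases hB with ⟨h2, hullB⟩ | ⟨h2', _⟩
      · exact coreMatched P Q B0 T0 B2 T2 Bx Tx h0 h2 f1 f2 f4 f4' f6 f7 hullA
          (Or.inl ⟨Be, Te, he, hf, d0e, hullB⟩)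
      · exact coreMismatch P Q B0 T0 B2 T2 h0 h2' f1 f2 f3
    · by_cases hq : T2 < Q
      · exact coreMismatch P Q B0 T0 B2 T2 h0 hq f1 f2 f3
      · push_neg at hq
        exact coreMatched P Q B0 T0 B2 T2 Bx Tx h0 (by nlinarith) f1 f2 f4 f4' f6 f7 hullA
          (Or.inr ⟨B3, T3, h3, h3', d03, c23⟩)
  · -- interval arc A attaches on the top line: mirror
    rcases hbranch with ⟨Be, Te, he, hf, d0e, hB⟩ | ⟨B3, T3, h3, h3', d03, c23⟩
    · rcases hB with ⟨h2', _⟩ | ⟨h2, hullB⟩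
      · exact coreMismatch Q P T0 B0 T2 B2 h0 h2' (comm_prod_le f1) (comm_prod_le f2)
          (comm_prod_lt f3)
      · exact coreMatched Q P T0 B0 T2 B2 Tx Bx h0 h2 (comm_prod_le f1) (comm_prod_le f2)
          f4' f4 (comm_prod_lt f6) (comm_prod_lt f7) hullA
          (Or.inl ⟨Te, Be, hf, he, comm_prod_lt d0e, hullB⟩)
    · by_cases hq : B2 < P
      · exact coreMismatch Q P T0 B0 T2 B2 h0 hq (comm_prod_le f1) (comm_prod_le f2)
          (comm_prod_lt f3)
      · push_neg at hq
        exact coreMatched Q P T0 B0 T2 B2 Tx Bx h0 (by nlinarith) (comm_prod_le f1)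
          (comm_prod_le f2) f4' f4 (comm_prod_lt f6) (comm_prod_lt f7) hullA
          (Or.inr ⟨T3, B3, h3', h3, comm_prod_lt d03, comm_prod_le c23⟩)

end IPCore

namespace IPZ

lemma shift_eq {n : ℕ} (hn : 0 < n) (v : ZMod n) (i j : ℕ) :
    (v + (i : ZMod n) = v + (j : ZMod n)) ↔ i % n = j % n := by
  rw [add_right_inj, ZMod.natCast_eq_natCast_iff']

lemma adj_iff {n : ℕ} (hn : 0 < n) (v : ZMod n) (i j : ℕ) :
    (CycleGraph n).Adj (v + (i : ZMod n)) (v + (j : ZMod n)) ↔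
      i % n ≠ j % n ∧ ((i+1) % n = j % n ∨ (j+1) % n = i % n) := by
  rw [CycleGraph, SimpleGraph.fromRel_adj]
  have h1 : (v + (j : ZMod n) = v + (i : ZMod n) + 1) ↔ (i+1) % n = j % n := by
    rw [show (v + (i : ZMod n) + 1 : ZMod n) = v + ((i+1 : ℕ) : ZMod n) by push_cast; ring,
      shift_eq hn, eq_comm]
  have h2 : (v + (i : ZMod n) = v + (j : ZMod n) + 1) ↔ (j+1) % n = i % n := by
    rw [show (v + (j : ZMod n) + 1 : ZMod n) = v + ((j+1 : ℕ) : ZMod n) by push_cast; ring,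
      shift_eq hn, eq_comm]
  rw [h1, h2, ne_eq, shift_eq hn]

lemma neg_one_off {n : ℕ} (hn : 2 ≤ n) (v : ZMod n) :
    v - 1 = v + ((n - 1 : ℕ) : ZMod n) := by
  have : ((n - 1 : ℕ) : ZMod n) = -1 := by
    rw [Nat.cast_sub (by omega : 1 ≤ n), ZMod.natCast_self]
    ring
  rw [this]; ring

end IPZ

/-- If a chordless cycle `C_n` (`n ≥ 4`) has an IP-SEG model with exactly two interval
arcs and exactly two permutation arcs, then each permutation arc consists of at most
two segments. -/
theorem two_arc_cycle_model_short_perm_arcs (n : ℕ) (hn : 4 ≤ n)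
    (s : ZMod n → IPSeg) (hm : IsIPSEGModel (CycleGraph n) s)
    (hint2 : ∃ v w : ZMod n, v ≠ w ∧ IntArcStart n s v ∧ IntArcStart n s w ∧
      ∀ u : ZMod n, IntArcStart n s u → u = v ∨ u = w)
    (hperm2 : ∃ v w : ZMod n, v ≠ w ∧ PermArcStart n s v ∧ PermArcStart n s w ∧
      ∀ u : ZMod n, PermArcStart n s u → u = v ∨ u = w) :
    ∀ (v : ZMod n) (lp : ℕ), PermArcStart n s v → PermArcLen n s v lp → lp ≤ 2 := by
  classical
  intro v lp hstart hlen
  by_contra hcon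
  push_neg at hcon
  have hlp3 : 3 ≤ lp := hcon
  have hnpos : 0 < n := by omega
  haveI : NeZero n := ⟨by omega⟩
  -- the arc length is less than n
  have hlpn : lp < n := by
    by_contra hge
    push_neg at hge
    have h1 := hlen.1 (lp % n) (by have := Nat.mod_lt lp hnpos; omega)
    have h2 := hlen.2
    rw [show ((lp : ℕ) : ZMod n) = ((lp % n : ℕ) : ZMod n) from (ZMod.natCast_mod lp n).symm] at h2
    exact h2 h1
  -- the other permutation arc
  obtain ⟨v₀, w₀, hvw₀, hv₀, hw₀, huniq₀⟩ := hperm2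
  obtain ⟨w, hwstart, hwne, huniq⟩ :
      ∃ w, PermArcStart n s w ∧ w ≠ v ∧ ∀ u, PermArcStart n s u → u = v ∨ u = w := by
    rcases huniq₀ v hstart with rfl | rfl
    · exact ⟨w₀, hw₀, hvw₀.symm, huniq₀⟩
    · exact ⟨v₀, hv₀, hvw₀, fun u hu => (huniq₀ u hu).symm⟩
  set ω := (w - v).val with hωdef
  have hωn : ω < n := ZMod.val_lt _
  have hweq : v + ((ω : ℕ) : ZMod n) = w := by
    have h := ZMod.natCast_rightInverse (n := n) (w - v)
    rw [hωdef, h]; ring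
  have hP : ∀ i, i < lp → (s (v + (i : ℕ))).IsPermutation := hlen.1
  have hNP : ¬ (s (v + ((lp : ℕ) : ZMod n))).IsPermutation := hlen.2
  have hprev : ¬ (s (v + ((n - 1 : ℕ) : ZMod n))).IsPermutation := by
    rw [← IPZ.neg_one_off (by omega) v]; exact hstart.2
  have hωperm : (s (v + ((ω : ℕ) : ZMod n))).IsPermutation := by rw [hweq]; exact hwstart.1
  have hω0 : ω ≠ 0 := by
    intro h; apply hwne; rw [← hweq, h]; simp
  have hωlp : lp < ω := by
    rcases lt_trichotomy ω lp with h | h | h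
    · exfalso
      apply hwstart.2
      have he : w - 1 = v + ((ω - 1 : ℕ) : ZMod n) := by
        rw [← hweq, Nat.cast_sub (by omega : 1 ≤ ω)]; push_cast; ring
      rw [he]
      exact hP (ω - 1) (by omega)
    · exact absurd hωperm (h ▸ hNP)
    · exact h
  have hωtop : ω ≠ n - 1 := fun h => hprev (h ▸ hωperm)
  -- the length m of the other permutation arc
  have hex : ∃ j, ¬ (s (v + ((ω + 1 + j : ℕ) : ZMod n))).IsPermutation := by
    refine ⟨n - 2 - ω, ?_⟩
    rw [show ω + 1 + (n - 2 - ω) = n - 1 by omega]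
    exact hprev
  set m := Nat.find hex + 1 with hmdef
  have hm1 : 1 ≤ m := by omega
  have hmNP : ¬ (s (v + ((ω + m : ℕ) : ZMod n))).IsPermutation := by
    have h := Nat.find_spec hex
    rwa [show ω + 1 + Nat.find hex = ω + m by omega] at h
  have hmall : ∀ j, j < m → (s (v + ((ω + j : ℕ) : ZMod n))).IsPermutation := by
    intro j hj
    rcases Nat.eq_zero_or_pos j with rfl | hj0
    · simpa using hωperm
    · have h := Nat.find_min hex (m := j - 1) (by omega)
      rw [not_not, show ω + 1 + (j - 1) = ω + j by omega] at h
      exact h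
  have hmub : ω + m ≤ n - 1 := by
    have hri : ¬ (s (v + ((ω + 1 + (n - 2 - ω) : ℕ) : ZMod n))).IsPermutation := by
      rw [show ω + 1 + (n - 2 - ω) = n - 1 by omega]; exact hprev
    have h := Nat.find_min' hex hri
    omega
  -- no permutation segments in the gaps
  have hgap1 : ∀ i, lp ≤ i → i < ω → ¬ (s (v + ((i : ℕ) : ZMod n))).IsPermutation := by
    intro i
    induction i using Nat.strong_induction_on with
    | _ i ih =>
      intro hi1 hi2 hperm
      rcases Nat.eq_or_lt_of_le hi1 with rfl | hgt
      · exact hNP hperm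
      · have hprev' : ¬ (s (v + ((i - 1 : ℕ) : ZMod n))).IsPermutation :=
          ih (i - 1) (by omega) (by omega) (by omega)
        have hstart' : PermArcStart n s (v + ((i : ℕ) : ZMod n)) := by
          refine ⟨hperm, ?_⟩
          rw [show (v + ((i : ℕ) : ZMod n)) - 1 = v + ((i - 1 : ℕ) : ZMod n) by
            rw [Nat.cast_sub (by omega : 1 ≤ i)]; push_cast; ring]
          exact hprev'
        rcases huniq _ hstart' with h | h
        · have h0 := (IPZ.shift_eq hnpos v i 0).1 (by simpa using h)
          rw [Nat.mod_eq_of_lt (by omega), Nat.zero_mod] at h0; omega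
        · have h0 := (IPZ.shift_eq hnpos v i ω).1 (by rw [hweq]; exact h)
          rw [Nat.mod_eq_of_lt (by omega), Nat.mod_eq_of_lt hωn] at h0; omega
  have hgap2 : ∀ i, ω + m ≤ i → i ≤ n - 1 → ¬ (s (v + ((i : ℕ) : ZMod n))).IsPermutation := by
    intro i
    induction i using Nat.strong_induction_on with
    | _ i ih =>
      intro hi1 hi2 hperm
      rcases Nat.eq_or_lt_of_le hi1 with rfl | hgt
      · exact hmNP hperm
      · have hprev' : ¬ (s (v + ((i - 1 : ℕ) : ZMod n))).IsPermutation :=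
          ih (i - 1) (by omega) (by omega) (by omega)
        have hstart' : PermArcStart n s (v + ((i : ℕ) : ZMod n)) := by
          refine ⟨hperm, ?_⟩
          rw [show (v + ((i : ℕ) : ZMod n)) - 1 = v + ((i - 1 : ℕ) : ZMod n) by
            rw [Nat.cast_sub (by omega : 1 ≤ i)]; push_cast; ring]
          exact hprev'
        rcases huniq _ hstart' with h | h
        · have h0 := (IPZ.shift_eq hnpos v i 0).1 (by simpa using h)
          rw [Nat.mod_eq_of_lt (by omega), Nat.zero_mod] at h0; omega
        · have h0 := (IPZ.shift_eq hnpos v i ω).1 (by rw [hweq]; exact h)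
          rw [Nat.mod_eq_of_lt (by omega), Nat.mod_eq_of_lt hωn] at h0; omega
  -- model bridges
  have hmod : ∀ a : ℕ, a < n → a % n = a := fun a ha => Nat.mod_eq_of_lt ha
  have hvne : ∀ i j : ℕ, i < n → j < n → i ≠ j →
      v + ((i : ℕ) : ZMod n) ≠ v + ((j : ℕ) : ZMod n) := by
    intro i j hi hj hne h
    have h0 := (IPZ.shift_eq hnpos v i j).1 h
    rw [hmod i hi, hmod j hj] at h0
    exact hne h0
  have hMeet : ∀ i j : ℕ, i < n → j < n → i ≠ j → ((i+1) % n = j ∨ (j+1) % n = i) →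
      ((s (v + ((i : ℕ) : ZMod n))).carrier ∩ (s (v + ((j : ℕ) : ZMod n))).carrier).Nonempty := by
    intro i j hi hj hne hadj
    refine (hm _ _ (hvne i j hi hj hne)).1 ?_
    rw [IPZ.adj_iff hnpos, hmod i hi, hmod j hj]
    exact ⟨hne, hadj⟩
  have hNoMeet : ∀ i j : ℕ, i < n → j < n → i ≠ j → ¬((i+1) % n = j ∨ (j+1) % n = i) →
      ∀ z ∈ (s (v + ((i : ℕ) : ZMod n))).carrier, z ∉ (s (v + ((j : ℕ) : ZMod n))).carrier := by
    intro i j hi hj hne hnadj z hz1 hz2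
    have hadj := (hm _ _ (hvne i j hi hj hne)).2 ⟨z, hz1, hz2⟩
    rw [IPZ.adj_iff hnpos, hmod i hi, hmod j hj] at hadj
    exact hnadj hadj.2
  have hnadj : ∀ i j : ℕ, j < n → i ≤ j → 2 ≤ j - i → j - i ≤ n - 2 →
      ¬((i+1) % n = j ∨ (j+1) % n = i) := by
    intro i j hj hij h2 hn2 hcon
    rcases hcon with h | h
    · rw [hmod (i+1) (by omega)] at h; omega
    · rcases eq_or_ne (j+1) n with he | he
      · rw [he, Nat.mod_self] at h; omega
      · rw [hmod (j+1) (by omega)] at h; omega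
  have hDisjP : ∀ i j : ℕ, j < n → i ≤ j → 2 ≤ j - i → j - i ≤ n - 2 →
      (s (v + ((i : ℕ) : ZMod n))).IsPermutation → (s (v + ((j : ℕ) : ZMod n))).IsPermutation →
      0 < (IPGeo.bot (s (v + ((i : ℕ) : ZMod n))) - IPGeo.bot (s (v + ((j : ℕ) : ZMod n)))) *
        (IPGeo.top (s (v + ((i : ℕ) : ZMod n))) - IPGeo.top (s (v + ((j : ℕ) : ZMod n)))) := by
    intro i j hj hij h2 hn2 hpi hpj
    by_contra hle
    push_neg at hle
    obtain ⟨z, hz1, hz2⟩ := (IPGeo.perm_perm_meet hpi hpj).2 hle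
    exact hNoMeet i j (by omega) hj (by omega) (hnadj i j hj hij h2 hn2) z hz1 hz2
  have hCross : ∀ i j : ℕ, i < n → j < n → i ≠ j → ((i+1) % n = j ∨ (j+1) % n = i) →
      (s (v + ((i : ℕ) : ZMod n))).IsPermutation → (s (v + ((j : ℕ) : ZMod n))).IsPermutation →
      (IPGeo.bot (s (v + ((i : ℕ) : ZMod n))) - IPGeo.bot (s (v + ((j : ℕ) : ZMod n)))) *
        (IPGeo.top (s (v + ((i : ℕ) : ZMod n))) - IPGeo.top (s (v + ((j : ℕ) : ZMod n)))) ≤ 0 :=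
    fun i j hi hj hne hadj hpi hpj =>
      (IPGeo.perm_perm_meet hpi hpj).1 (hMeet i j hi hj hne hadj)
  -- specific permutation segments
  have perm0 : (s (v + ((0 : ℕ) : ZMod n))).IsPermutation := hP 0 (by omega)
  have perm1 : (s (v + ((1 : ℕ) : ZMod n))).IsPermutation := hP 1 (by omega)
  have perm2 : (s (v + ((2 : ℕ) : ZMod n))).IsPermutation := hP 2 (by omega)
  have permx0 : (s (v + ((ω : ℕ) : ZMod n))).IsPermutation := hωperm
  have permxm : (s (v + ((ω + m - 1 : ℕ) : ZMod n))).IsPermutation := by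
    have h := hmall (m - 1) (by omega)
    rwa [show ω + (m - 1) = ω + m - 1 by omega] at h
  -- generic hull fact for an interval arc [σ, σ+ℓ) attached to perm segs i0 (at σ)
  -- and iE (at σ+ℓ-1), blocking perm seg iY
  have hullGen : ∀ (σ ℓ i0 iE iY : ℕ), 1 ≤ ℓ → σ + ℓ ≤ n → i0 < n → iE < n → iY < n →
      (∀ j, j < ℓ → (s (v + ((σ + j : ℕ) : ZMod n))).IsInterval) →
      (∀ j, j + 1 < ℓ → ((s (v + ((σ + j : ℕ) : ZMod n))).carrier ∩
        (s (v + ((σ + j + 1 : ℕ) : ZMod n))).carrier).Nonempty) →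
      ((s (v + ((i0 : ℕ) : ZMod n))).carrier ∩ (s (v + ((σ : ℕ) : ZMod n))).carrier).Nonempty →
      ((s (v + ((iE : ℕ) : ZMod n))).carrier ∩
        (s (v + ((σ + ℓ - 1 : ℕ) : ZMod n))).carrier).Nonempty →
      (∀ j, j < ℓ → ¬ ((s (v + ((iY : ℕ) : ZMod n))).carrier ∩
        (s (v + ((σ + j : ℕ) : ZMod n))).carrier).Nonempty) →
      (s (v + ((i0 : ℕ) : ZMod n))).IsPermutation →
      (s (v + ((iE : ℕ) : ZMod n))).IsPermutation →
      (s (v + ((iY : ℕ) : ZMod n))).IsPermutation →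
      (((s (v + ((σ : ℕ) : ZMod n))).p.2 = 1 →
        IPGeo.bot (s (v + ((iY : ℕ) : ZMod n))) ∉
          Set.uIcc (IPGeo.bot (s (v + ((i0 : ℕ) : ZMod n))))
            (IPGeo.bot (s (v + ((iE : ℕ) : ZMod n))))) ∧
       ((s (v + ((σ : ℕ) : ZMod n))).p.2 = 2 →
        IPGeo.top (s (v + ((iY : ℕ) : ZMod n))) ∉
          Set.uIcc (IPGeo.top (s (v + ((i0 : ℕ) : ZMod n))))
            (IPGeo.top (s (v + ((iE : ℕ) : ZMod n)))))) := by
    intro σ ℓ i0 iE iY hℓ1 hσℓ hi0 hiE hiY hints hmeets hm0 hmE hblock hp0 hpE hpY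
    have harcline : ∀ j, j < ℓ →
        (s (v + ((σ + j : ℕ) : ZMod n))).p.2 = (s (v + ((σ : ℕ) : ZMod n))).p.2 := by
      intro j
      induction j with
      | zero => intro _; rfl
      | succ j ih =>
        intro hj
        have hmeet' : ((s (v + ((σ + (j+1) : ℕ) : ZMod n))).carrier ∩
            (s (v + ((σ + j : ℕ) : ZMod n))).carrier).Nonempty := by
          obtain ⟨z, hz1, hz2⟩ := hmeets j hj
          exact ⟨z, by rwa [show σ + (j+1) = σ + j + 1 by omega], hz1⟩
        have h1 := IPGeo.int_int_line (hints (j+1) hj) (hints j (by omega)) hmeet'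
        rw [h1, ih (by omega)]
    have hlineE : (s (v + ((σ + ℓ - 1 : ℕ) : ZMod n))).p.2 =
        (s (v + ((σ : ℕ) : ZMod n))).p.2 := by
      have h := harcline (ℓ - 1) (by omega)
      rwa [show σ + (ℓ - 1) = σ + ℓ - 1 by omega] at h
    have hatt0 := IPGeo.perm_int_attach hp0 (hints 0 (by omega)) (by
      rwa [show σ + 0 = σ by omega])
    have hattE := IPGeo.perm_int_attach hpE
      (by have h := hints (ℓ-1) (by omega); rwa [show σ + (ℓ - 1) = σ + ℓ - 1 by omega] at h)
      hmE
    rw [show σ + 0 = σ by omega] at hatt0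
    constructor
    · intro hc1 hmem
      obtain ⟨r, hr, hrmem⟩ := IPGeo.hull_chain (fun r => s (v + ((σ + r : ℕ) : ZMod n)))
        ℓ (by omega) hints (fun r hr => by
          have h := hmeets r hr
          rwa [show σ + r + 1 = σ + (r+1) by omega] at h)
        _ _ _ (hatt0.1 hc1)
        (by
          have h := hattE.1 (by rw [hlineE]; exact hc1)
          rwa [show σ + ℓ - 1 = σ + (ℓ - 1) by omega] at h)
        hmem
      refine hblock r hr ⟨(IPGeo.bot (s (v + ((iY : ℕ) : ZMod n))), 1),
        IPGeo.bot_mem hpY, ?_⟩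
      rw [IPGeo.mem_int_carrier (hints r hr)]
      exact ⟨by rw [harcline r hr, hc1], hrmem⟩
    · intro hc2 hmem
      obtain ⟨r, hr, hrmem⟩ := IPGeo.hull_chain (fun r => s (v + ((σ + r : ℕ) : ZMod n)))
        ℓ (by omega) hints (fun r hr => by
          have h := hmeets r hr
          rwa [show σ + r + 1 = σ + (r+1) by omega] at h)
        _ _ _ (hatt0.2 hc2)
        (by
          have h := hattE.2 (by rw [hlineE]; exact hc2)
          rwa [show σ + ℓ - 1 = σ + (ℓ - 1) by omega] at h)
        hmem
      refine hblock r hr ⟨(IPGeo.top (s (v + ((iY : ℕ) : ZMod n))), 2),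
        IPGeo.top_mem hpY, ?_⟩
      rw [IPGeo.mem_int_carrier (hints r hr)]
      exact ⟨by rw [harcline r hr, hc2], hrmem⟩
  -- hull facts for the two interval arcs
  have hullA := hullGen (ω+m) (n - (ω+m)) (ω+m-1) 0 2 (by omega) (by omega) (by omega)
    (by omega) (by omega)
    (fun j hj => IPGeo.int_of_not_perm (hgap2 (ω+m+j) (by omega) (by omega)))
    (fun j hj => hMeet (ω+m+j) (ω+m+j+1) (by omega) (by omega) (by omega)
      (Or.inl (hmod (ω+m+j+1) (by omega))))
    (hMeet (ω+m-1) (ω+m) (by omega) (by omega) (by omega)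
      (Or.inl (by rw [show ω+m-1+1 = ω+m by omega]; exact hmod (ω+m) (by omega))))
    (by
      rw [show ω + m + (n - (ω+m)) - 1 = n - 1 by omega]
      exact hMeet 0 (n-1) (by omega) (by omega) (by omega)
        (Or.inr (by rw [show n-1+1 = n by omega]; exact Nat.mod_self n)))
    (fun j hj hcon => by
      obtain ⟨z, h1, h2⟩ := hcon
      exact hNoMeet 2 (ω+m+j) (by omega) (by omega) (by omega)
        (hnadj 2 (ω+m+j) (by omega) (by omega) (by omega) (by omega)) z h1 h2)
    permxm perm0 perm2
  have hullB := hullGen lp (ω - lp) (lp-1) ω 0 (by omega) (by omega) (by omega)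
    (by omega) (by omega)
    (fun j hj => IPGeo.int_of_not_perm (hgap1 (lp+j) (by omega) (by omega)))
    (fun j hj => hMeet (lp+j) (lp+j+1) (by omega) (by omega) (by omega)
      (Or.inl (hmod (lp+j+1) (by omega))))
    (hMeet (lp-1) lp (by omega) (by omega) (by omega)
      (Or.inl (by rw [show lp-1+1 = lp by omega]; exact hmod lp (by omega))))
    (by
      rw [show lp + (ω - lp) - 1 = ω - 1 by omega]
      exact hMeet ω (ω-1) (by omega) (by omega) (by omega)
        (Or.inr (by rw [show ω-1+1 = ω by omega]; exact hmod ω (by omega))))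
    (fun j hj hcon => by
      obtain ⟨z, h1, h2⟩ := hcon
      exact hNoMeet 0 (lp+j) (by omega) (by omega) (by omega)
        (hnadj 0 (lp+j) (by omega) (by omega) (by omega) (by omega)) z h1 h2)
    (hP (lp-1) (by omega)) permx0 perm0
  -- line constancy on interval arc A (externally, for the attachment of u0)
  have harcA : ∀ j, j < n - (ω+m) →
      (s (v + ((ω+m+j : ℕ) : ZMod n))).p.2 = (s (v + ((ω+m : ℕ) : ZMod n))).p.2 := by
    intro j
    induction j with
    | zero => intro _; rfl
    | succ j ih =>
      intro hj
      have hmeet' : ((s (v + ((ω+m+(j+1) : ℕ) : ZMod n))).carrier ∩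
          (s (v + ((ω+m+j : ℕ) : ZMod n))).carrier).Nonempty := by
        obtain ⟨z, hz1, hz2⟩ := hMeet (ω+m+j) (ω+m+j+1) (by omega) (by omega) (by omega)
          (Or.inl (hmod (ω+m+j+1) (by omega)))
        exact ⟨z, by rwa [show ω+m+(j+1) = ω+m+j+1 by omega], hz1⟩
      have h1 := IPGeo.int_int_line
        (IPGeo.int_of_not_perm (hgap2 (ω+m+(j+1)) (by omega) (by omega)))
        (IPGeo.int_of_not_perm (hgap2 (ω+m+j) (by omega) (by omega))) hmeet'
      rw [h1, ih (by omega)]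
  have hAint : (s (v + ((n-1 : ℕ) : ZMod n))).IsInterval :=
    IPGeo.int_of_not_perm (hgap2 (n-1) (by omega) le_rfl)
  have hAline : (s (v + ((n-1 : ℕ) : ZMod n))).p.2 = (s (v + ((ω+m : ℕ) : ZMod n))).p.2 := by
    have h := harcA (n - (ω+m) - 1) (by omega)
    rwa [show ω+m+(n-(ω+m)-1) = n-1 by omega] at h
  have hBint : (s (v + ((lp : ℕ) : ZMod n))).IsInterval := IPGeo.int_of_not_perm hNP
  have hatt0 := IPGeo.perm_int_attach perm0 hAint
    (hMeet 0 (n-1) (by omega) (by omega) (by omega)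
      (Or.inr (by rw [show n-1+1 = n by omega]; exact Nat.mod_self n)))
  -- the specific cross products
  have cross01 := hCross 0 1 (by omega) (by omega) (by omega)
    (Or.inl (by rw [hmod (0+1) (by omega)])) perm0 perm1
  have cross12 := hCross 2 1 (by omega) (by omega) (by omega)
    (Or.inr (by rw [hmod (1+1) (by omega)])) perm2 perm1
  have disj02 := hDisjP 0 2 (by omega) (by omega) (by omega) (by omega) perm0 perm2
  have disj0x := hDisjP 0 (ω+m-1) (by omega) (by omega) (by omega) (by omega) perm0 permxm
  have disj2x := hDisjP 2 (ω+m-1) (by omega) (by omega) (by omega) (by omega) perm2 permxm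
  have disj0e := hDisjP 0 ω (by omega) (by omega) (by omega) (by omega) perm0 permx0
  -- abbreviations
  set p := IPGeo.bot (s (v + ((1 : ℕ) : ZMod n))) with hp_def
  set q := IPGeo.top (s (v + ((1 : ℕ) : ZMod n))) with hq_def
  set b0 := IPGeo.bot (s (v + ((0 : ℕ) : ZMod n))) with hb0_def
  set t0 := IPGeo.top (s (v + ((0 : ℕ) : ZMod n))) with ht0_def
  set b2 := IPGeo.bot (s (v + ((2 : ℕ) : ZMod n))) with hb2_def
  set t2 := IPGeo.top (s (v + ((2 : ℕ) : ZMod n))) with ht2_def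
  set bx := IPGeo.bot (s (v + ((ω+m-1 : ℕ) : ZMod n))) with hbx_def
  set tx := IPGeo.top (s (v + ((ω+m-1 : ℕ) : ZMod n))) with htx_def
  set be := IPGeo.bot (s (v + ((ω : ℕ) : ZMod n))) with hbe_def
  set te := IPGeo.top (s (v + ((ω : ℕ) : ZMod n))) with hte_def
  set b3 := IPGeo.bot (s (v + ((3 : ℕ) : ZMod n))) with hb3_def
  set t3 := IPGeo.top (s (v + ((3 : ℕ) : ZMod n))) with ht3_def
  set cA := (s (v + ((ω+m : ℕ) : ZMod n))).p.2 with hcA_def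
  set cB := (s (v + ((lp : ℕ) : ZMod n))).p.2 with hcB_def
  have hcA : cA = 1 ∨ cA = 2 := (s _).hp
  have hcB : cB = 1 ∨ cB = 2 := (s _).hp
  -- the final pure-real contradiction, given normalized (all-left) data
  have final : ∀ (P Q B0 T0 B2 T2 Bx Tx Be Te B3 T3 : ℝ),
      (B0-P)*(T0-Q) ≤ 0 → (B2-P)*(T2-Q) ≤ 0 → 0 < (B0-B2)*(T0-T2) →
      Bx < P → Tx < Q → 0 < (B0-Bx)*(T0-Tx) → 0 < (B2-Bx)*(T2-Tx) →
      (cA = 1 → B0 < P ∧ B2 ∉ Set.uIcc B0 Bx) →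
      (cA = 2 → T0 < Q ∧ T2 ∉ Set.uIcc T0 Tx) →
      (lp = 3 → Be < P ∧ Te < Q ∧ 0 < (B0-Be)*(T0-Te) ∧
        (cB = 1 → B2 < P ∧ B0 ∉ Set.uIcc B2 Be) ∧
        (cB = 2 → T2 < Q ∧ T0 ∉ Set.uIcc T2 Te)) →
      (lp ≠ 3 → B3 < P ∧ T3 < Q ∧ 0 < (B0-B3)*(T0-T3) ∧ (B2-B3)*(T2-T3) ≤ 0) →
      False := by
    intro P Q B0 T0 B2 T2 Bx Tx Be Te B3 T3 f1 f2 f3 f4 f4' f6 f7 hA1 hA2 hk3 hk4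
    refine IPCore.assembled P Q B0 T0 B2 T2 Bx Tx f1 f2 f3 f4 f4' f6 f7 ?_ ?_
    · rcases hcA with hca | hca
      · exact Or.inl (hA1 hca)
      · exact Or.inr (hA2 hca)
    · by_cases hlp : lp = 3
      · obtain ⟨he, hf, d0e, hB1, hB2⟩ := hk3 hlp
        refine Or.inl ⟨Be, Te, he, hf, d0e, ?_⟩
        rcases hcB with hcb | hcb
        · exact Or.inl (hB1 hcb)
        · exact Or.inr (hB2 hcb)
      · exact Or.inr ⟨B3, T3, (hk4 hlp).1, (hk4 hlp).2.1, (hk4 hlp).2.2.1, (hk4 hlp).2.2.2⟩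
  -- side machinery: every segment of the chain 3..n-1 is disjoint from u1
  have hdisj1 : ∀ i, 3 ≤ i → i ≤ n-1 →
      ∀ z ∈ (s (v + ((i : ℕ) : ZMod n))).carrier, z ∉ (s (v + ((1 : ℕ) : ZMod n))).carrier := by
    intro i h1 h2
    refine hNoMeet i 1 (by omega) (by omega) (by omega) ?_
    intro hcon
    rcases hcon with h | h
    · rcases eq_or_ne (i+1) n with he | he
      · rw [he, Nat.mod_self] at h; omega
      · rw [hmod (i+1) (by omega)] at h; omega
    · rw [hmod (1+1) (by omega)] at h; omega
  have hdich : ∀ i, 3 ≤ i → i ≤ n-1 →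
      (∀ z ∈ (s (v + ((i : ℕ) : ZMod n))).carrier, z.1 < IPGeo.lineAt p q z.2) ∨
      (∀ z ∈ (s (v + ((i : ℕ) : ZMod n))).carrier, IPGeo.lineAt p q z.2 < z.1) :=
    fun i h1 h2 => IPGeo.side_dichotomy perm1 _ (hdisj1 i h1 h2)
  have hstep : ∀ i, 3 ≤ i → i + 1 ≤ n-1 →
      ((s (v + ((i : ℕ) : ZMod n))).carrier ∩
        (s (v + ((i+1 : ℕ) : ZMod n))).carrier).Nonempty :=
    fun i h1 h2 => hMeet i (i+1) (by omega) (by omega) (by omega)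
      (Or.inl (hmod (i+1) (by omega)))
  rcases hdich 3 (by omega) (by omega) with h3side | h3side
  · -- all of the chain lies to the left of u1
    have hall : ∀ i, 3 ≤ i → i ≤ n-1 →
        ∀ z ∈ (s (v + ((i : ℕ) : ZMod n))).carrier, z.1 < IPGeo.lineAt p q z.2 := by
      intro i h1
      induction i, h1 using Nat.le_induction with
      | base => intro _; exact h3side
      | succ i hi ih =>
        intro h2
        rcases hdich (i+1) (by omega) h2 with h | h
        · exact h
        · exfalso
          obtain ⟨z, hz1, hz2⟩ := hstep i hi (by omega)
          have ha := ih (by omega) z hz1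
          have hb := h z hz2
          linarith
    have hsideP : ∀ i, 3 ≤ i → i ≤ n-1 → (s (v + ((i : ℕ) : ZMod n))).IsPermutation →
        IPGeo.bot (s (v + ((i : ℕ) : ZMod n))) < p ∧
        IPGeo.top (s (v + ((i : ℕ) : ZMod n))) < q := by
      intro i h1 h2 hpi
      constructor
      · have h := hall i h1 h2 _ (IPGeo.bot_mem hpi)
        simpa [IPGeo.lineAt_one] using h
      · have h := hall i h1 h2 _ (IPGeo.top_mem hpi)
        simpa [IPGeo.lineAt_two] using h
    have hsx := hsideP (ω+m-1) (by omega) (by omega) permxm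
    have hse := hsideP ω (by omega) (by omega) permx0
    have hAint' : (s (v + ((n-1 : ℕ) : ZMod n))).p.2 = (s (v + ((n-1 : ℕ) : ZMod n))).q.2 :=
      hAint
    have hattA : (cA = 1 → b0 < p) ∧ (cA = 2 → t0 < q) := by
      have hpA := hall (n-1) (by omega) le_rfl _
        (left_mem_segment ℝ (s (v + ((n-1 : ℕ) : ZMod n))).p (s (v + ((n-1 : ℕ) : ZMod n))).q)
      have hqA := hall (n-1) (by omega) le_rfl _
        (right_mem_segment ℝ (s (v + ((n-1 : ℕ) : ZMod n))).p (s (v + ((n-1 : ℕ) : ZMod n))).q)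
      constructor
      · intro hc
        have h1 : (s (v + ((n-1 : ℕ) : ZMod n))).p.2 = 1 := by
          rw [hAline]; exact hc
        have h2 : (s (v + ((n-1 : ℕ) : ZMod n))).q.2 = 1 := by rw [← hAint']; exact h1
        refine IPGeo.mem_uIcc_lt (hatt0.1 h1) ?_ ?_
        · rw [h1, IPGeo.lineAt_one] at hpA; exact hpA
        · rw [h2, IPGeo.lineAt_one] at hqA; exact hqA
      · intro hc
        have h1 : (s (v + ((n-1 : ℕ) : ZMod n))).p.2 = 2 := by
          rw [hAline]; exact hc
        have h2 : (s (v + ((n-1 : ℕ) : ZMod n))).q.2 = 2 := by rw [← hAint']; exact h1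
        refine IPGeo.mem_uIcc_lt (hatt0.2 h1) ?_ ?_
        · rw [h1, IPGeo.lineAt_two] at hpA; exact hpA
        · rw [h2, IPGeo.lineAt_two] at hqA; exact hqA
    refine final p q b0 t0 b2 t2 bx tx be te b3 t3 cross01 cross12 disj02
      hsx.1 hsx.2 disj0x disj2x ?_ ?_ ?_ ?_
    · intro hca
      exact ⟨hattA.1 hca, by rw [Set.uIcc_comm]; exact hullA.1 hca⟩
    · intro hca
      exact ⟨hattA.2 hca, by rw [Set.uIcc_comm]; exact hullA.2 hca⟩
    · intro hlp
      have hB2meet := hMeet 2 lp (by omega) (by omega) (by omega)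
        (Or.inl (by rw [hmod (2+1) (by omega)]; omega))
      have hatt2 := IPGeo.perm_int_attach perm2 hBint hB2meet
      have hpB := hall lp (by omega) (by omega) _
        (left_mem_segment ℝ (s (v + ((lp : ℕ) : ZMod n))).p (s (v + ((lp : ℕ) : ZMod n))).q)
      have hqB := hall lp (by omega) (by omega) _
        (right_mem_segment ℝ (s (v + ((lp : ℕ) : ZMod n))).p (s (v + ((lp : ℕ) : ZMod n))).q)
      have hBint' : (s (v + ((lp : ℕ) : ZMod n))).p.2 = (s (v + ((lp : ℕ) : ZMod n))).q.2 :=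
        hBint
      have hullB' := hullB
      rw [show lp - 1 = 2 by omega] at hullB'
      refine ⟨hse.1, hse.2, disj0e, ?_, ?_⟩
      · intro hcb
        have h1 : (s (v + ((lp : ℕ) : ZMod n))).p.2 = 1 := hcb
        have h2 : (s (v + ((lp : ℕ) : ZMod n))).q.2 = 1 := by rw [← hBint']; exact h1
        refine ⟨IPGeo.mem_uIcc_lt (hatt2.1 h1) ?_ ?_, hullB'.1 h1⟩
        · rw [h1, IPGeo.lineAt_one] at hpB; exact hpB
        · rw [h2, IPGeo.lineAt_one] at hqB; exact hqB
      · intro hcb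
        have h1 : (s (v + ((lp : ℕ) : ZMod n))).p.2 = 2 := hcb
        have h2 : (s (v + ((lp : ℕ) : ZMod n))).q.2 = 2 := by rw [← hBint']; exact h1
        refine ⟨IPGeo.mem_uIcc_lt (hatt2.2 h1) ?_ ?_, hullB'.2 h1⟩
        · rw [h1, IPGeo.lineAt_two] at hpB; exact hpB
        · rw [h2, IPGeo.lineAt_two] at hqB; exact hqB
    · intro hlp
      have perm3 : (s (v + ((3 : ℕ) : ZMod n))).IsPermutation := hP 3 (by omega)
      have hs3 := hsideP 3 (by omega) (by omega) perm3
      have disj03 := hDisjP 0 3 (by omega) (by omega) (by omega) (by omega) perm0 perm3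
      have cross23 := hCross 2 3 (by omega) (by omega) (by omega)
        (Or.inl (by rw [hmod (2+1) (by omega)])) perm2 perm3
      exact ⟨hs3.1, hs3.2, disj03, cross23⟩
  · -- all of the chain lies to the right of u1: apply the argument to reflected data
    have hall : ∀ i, 3 ≤ i → i ≤ n-1 →
        ∀ z ∈ (s (v + ((i : ℕ) : ZMod n))).carrier, IPGeo.lineAt p q z.2 < z.1 := by
      intro i h1
      induction i, h1 using Nat.le_induction with
      | base => intro _; exact h3side
      | succ i hi ih =>
        intro h2
        rcases hdich (i+1) (by omega) h2 with h | h
        · exfalso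
          obtain ⟨z, hz1, hz2⟩ := hstep i hi (by omega)
          have ha := ih (by omega) z hz1
          have hb := h z hz2
          linarith
        · exact h
    have hsideP : ∀ i, 3 ≤ i → i ≤ n-1 → (s (v + ((i : ℕ) : ZMod n))).IsPermutation →
        p < IPGeo.bot (s (v + ((i : ℕ) : ZMod n))) ∧
        q < IPGeo.top (s (v + ((i : ℕ) : ZMod n))) := by
      intro i h1 h2 hpi
      constructor
      · have h := hall i h1 h2 _ (IPGeo.bot_mem hpi)
        simpa [IPGeo.lineAt_one] using h
      · have h := hall i h1 h2 _ (IPGeo.top_mem hpi)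
        simpa [IPGeo.lineAt_two] using h
    have hsx := hsideP (ω+m-1) (by omega) (by omega) permxm
    have hse := hsideP ω (by omega) (by omega) permx0
    have hAint' : (s (v + ((n-1 : ℕ) : ZMod n))).p.2 = (s (v + ((n-1 : ℕ) : ZMod n))).q.2 :=
      hAint
    have hattA : (cA = 1 → p < b0) ∧ (cA = 2 → q < t0) := by
      have hpA := hall (n-1) (by omega) le_rfl _
        (left_mem_segment ℝ (s (v + ((n-1 : ℕ) : ZMod n))).p (s (v + ((n-1 : ℕ) : ZMod n))).q)
      have hqA := hall (n-1) (by omega) le_rfl _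
        (right_mem_segment ℝ (s (v + ((n-1 : ℕ) : ZMod n))).p (s (v + ((n-1 : ℕ) : ZMod n))).q)
      constructor
      · intro hc
        have h1 : (s (v + ((n-1 : ℕ) : ZMod n))).p.2 = 1 := by rw [hAline]; exact hc
        have h2 : (s (v + ((n-1 : ℕ) : ZMod n))).q.2 = 1 := by rw [← hAint']; exact h1
        refine IPGeo.mem_uIcc_gt (hatt0.1 h1) ?_ ?_
        · rw [h1, IPGeo.lineAt_one] at hpA; exact hpA
        · rw [h2, IPGeo.lineAt_one] at hqA; exact hqA
      · intro hc
        have h1 : (s (v + ((n-1 : ℕ) : ZMod n))).p.2 = 2 := by rw [hAline]; exact hc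
        have h2 : (s (v + ((n-1 : ℕ) : ZMod n))).q.2 = 2 := by rw [← hAint']; exact h1
        refine IPGeo.mem_uIcc_gt (hatt0.2 h1) ?_ ?_
        · rw [h1, IPGeo.lineAt_two] at hpA; exact hpA
        · rw [h2, IPGeo.lineAt_two] at hqA; exact hqA
    refine final (-p) (-q) (-b0) (-t0) (-b2) (-t2) (-bx) (-tx) (-be) (-te) (-b3) (-t3)
      (by rw [IPCore.neg_prod_eq]; exact cross01)
      (by rw [IPCore.neg_prod_eq]; exact cross12)
      (by rw [IPCore.neg_prod_eq]; exact disj02)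
      (neg_lt_neg hsx.1) (neg_lt_neg hsx.2)
      (by rw [IPCore.neg_prod_eq]; exact disj0x)
      (by rw [IPCore.neg_prod_eq]; exact disj2x)
      ?_ ?_ ?_ ?_
    · intro hca
      refine ⟨neg_lt_neg (hattA.1 hca), fun hmem => hullA.1 hca ?_⟩
      rw [Set.uIcc_comm]
      exact IPCore.neg_mem_uIcc.1 hmem
    · intro hca
      refine ⟨neg_lt_neg (hattA.2 hca), fun hmem => hullA.2 hca ?_⟩
      rw [Set.uIcc_comm]
      exact IPCore.neg_mem_uIcc.1 hmem
    · intro hlp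
      have hB2meet := hMeet 2 lp (by omega) (by omega) (by omega)
        (Or.inl (by rw [hmod (2+1) (by omega)]; omega))
      have hatt2 := IPGeo.perm_int_attach perm2 hBint hB2meet
      have hpB := hall lp (by omega) (by omega) _
        (left_mem_segment ℝ (s (v + ((lp : ℕ) : ZMod n))).p (s (v + ((lp : ℕ) : ZMod n))).q)
      have hqB := hall lp (by omega) (by omega) _
        (right_mem_segment ℝ (s (v + ((lp : ℕ) : ZMod n))).p (s (v + ((lp : ℕ) : ZMod n))).q)
      have hBint' : (s (v + ((lp : ℕ) : ZMod n))).p.2 = (s (v + ((lp : ℕ) : ZMod n))).q.2 :=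
        hBint
      have hullB' := hullB
      rw [show lp - 1 = 2 by omega] at hullB'
      refine ⟨neg_lt_neg hse.1, neg_lt_neg hse.2,
        by rw [IPCore.neg_prod_eq]; exact disj0e, ?_, ?_⟩
      · intro hcb
        have h1 : (s (v + ((lp : ℕ) : ZMod n))).p.2 = 1 := hcb
        have h2 : (s (v + ((lp : ℕ) : ZMod n))).q.2 = 1 := by rw [← hBint']; exact h1
        refine ⟨neg_lt_neg (IPGeo.mem_uIcc_gt (hatt2.1 h1) ?_ ?_),
          fun hmem => hullB'.1 h1 (IPCore.neg_mem_uIcc.1 hmem)⟩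
        · rw [h1, IPGeo.lineAt_one] at hpB; exact hpB
        · rw [h2, IPGeo.lineAt_one] at hqB; exact hqB
      · intro hcb
        have h1 : (s (v + ((lp : ℕ) : ZMod n))).p.2 = 2 := hcb
        have h2 : (s (v + ((lp : ℕ) : ZMod n))).q.2 = 2 := by rw [← hBint']; exact h1
        refine ⟨neg_lt_neg (IPGeo.mem_uIcc_gt (hatt2.2 h1) ?_ ?_),
          fun hmem => hullB'.2 h1 (IPCore.neg_mem_uIcc.1 hmem)⟩
        · rw [h1, IPGeo.lineAt_two] at hpB; exact hpB
        · rw [h2, IPGeo.lineAt_two] at hqB; exact hqB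
    · intro hlp
      have perm3 : (s (v + ((3 : ℕ) : ZMod n))).IsPermutation := hP 3 (by omega)
      have hs3 := hsideP 3 (by omega) (by omega) perm3
      have disj03 := hDisjP 0 3 (by omega) (by omega) (by omega) (by omega) perm0 perm3
      have cross23 := hCross 2 3 (by omega) (by omega) (by omega)
        (Or.inl (by rw [hmod (2+1) (by omega)])) perm2 perm3
      exact ⟨neg_lt_neg hs3.1, neg_lt_neg hs3.2,
        by rw [IPCore.neg_prod_eq]; exact disj03,
        by rw [IPCore.neg_prod_eq]; exact cross23⟩
end

section
/- For every n ≥ 3, the chordless cycle C_n is an IP-SEG* graph. In particular, C₅ is an IP-SEG* graph, so the classes of IP-SEG* and IP-SEG graphs contain odd holes and are not contained in the class of perfect graphs. -/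
section Geom

lemma mem_seg_iff {a ya b yb : ℝ} {z : ℝ × ℝ} :
    z ∈ segment ℝ ((a, ya) : ℝ × ℝ) (b, yb) ↔
      ∃ t, 0 ≤ t ∧ t ≤ 1 ∧ z = ((1 - t) * a + t * b, (1 - t) * ya + t * yb) := by
  rw [segment_eq_image]
  constructor
  · rintro ⟨t, ⟨ht0, ht1⟩, rfl⟩
    exact ⟨t, ht0, ht1, by simp [Prod.ext_iff]⟩
  · rintro ⟨t, ht0, ht1, rfl⟩
    exact ⟨t, ⟨ht0, ht1⟩, by simp [Prod.ext_iff]⟩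

lemma horiz_mem {a b : ℝ} (hab : a ≤ b) {z : ℝ × ℝ} :
    z ∈ segment ℝ ((a, 1) : ℝ × ℝ) (b, 1) ↔ z.2 = 1 ∧ a ≤ z.1 ∧ z.1 ≤ b := by
  rw [mem_seg_iff]
  constructor
  · rintro ⟨t, ht0, ht1, rfl⟩
    refine ⟨by norm_num, ?_, ?_⟩
    · show a ≤ (1 - t) * a + t * b
      nlinarith
    · show (1 - t) * a + t * b ≤ b
      nlinarith
  · rintro ⟨h2, h1, h1'⟩
    obtain ⟨x, y⟩ := z
    simp only at h1 h1' h2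
    subst h2
    rcases eq_or_lt_of_le hab with h | h
    · have hx : x = a := le_antisymm (h ▸ h1') h1
      exact ⟨0, le_refl _, zero_le_one, by norm_num [hx]⟩
    · refine ⟨(x - a) / (b - a), div_nonneg (by linarith) (by linarith),
        by rw [div_le_one (by linarith)]; linarith, ?_⟩
      have hd : b - a ≠ 0 := by linarith
      simp only [Prod.mk.injEq]
      constructor
      · field_simp
        ring
      · ring

lemma perm_meets_line1 {a b : ℝ} {z : ℝ × ℝ}
    (h : z ∈ segment ℝ ((a, 1) : ℝ × ℝ) (b, 2)) (h2 : z.2 = 1) : z = (a, 1) := by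
  rw [mem_seg_iff] at h
  obtain ⟨t, ht0, ht1, rfl⟩ := h
  have : t = 0 := by simp at h2; linarith
  subst this; norm_num

lemma inter_horiz_horiz {a b c d : ℝ} (hab : a ≤ b) (hcd : c ≤ d) :
    (segment ℝ ((a, 1) : ℝ × ℝ) (b, 1) ∩ segment ℝ ((c, 1) : ℝ × ℝ) (d, 1)).Nonempty
      ↔ c ≤ b ∧ a ≤ d := by
  constructor
  · rintro ⟨z, hz1, hz2⟩
    rw [horiz_mem hab] at hz1
    rw [horiz_mem hcd] at hz2
    constructor <;> linarith [hz1.2.1, hz1.2.2, hz2.2.1, hz2.2.2]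
  · rintro ⟨h1, h2⟩
    refine ⟨(max a c, 1), ?_, ?_⟩
    · rw [horiz_mem hab]
      exact ⟨rfl, le_max_left _ _, max_le hab h1⟩
    · rw [horiz_mem hcd]
      exact ⟨rfl, le_max_right _ _, max_le h2 hcd⟩

lemma inter_perm_horiz {a b c d : ℝ} (hcd : c ≤ d) :
    (segment ℝ ((a, 1) : ℝ × ℝ) (b, 2) ∩ segment ℝ ((c, 1) : ℝ × ℝ) (d, 1)).Nonempty
      ↔ c ≤ a ∧ a ≤ d := by
  constructor
  · rintro ⟨z, hz1, hz2⟩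
    rw [horiz_mem hcd] at hz2
    have := perm_meets_line1 hz1 hz2.1
    subst this
    exact ⟨hz2.2.1, hz2.2.2⟩
  · rintro ⟨h1, h2⟩
    refine ⟨(a, 1), left_mem_segment _ _ _, ?_⟩
    rw [horiz_mem hcd]
    exact ⟨rfl, h1, h2⟩

lemma mid_mem_perm (a b : ℝ) :
    ((a + b) / 2, (3 : ℝ) / 2) ∈ segment ℝ ((a, 1) : ℝ × ℝ) (b, 2) := by
  rw [mem_seg_iff]
  exact ⟨1/2, by norm_num, by norm_num, by norm_num; ring⟩

end Geom

/-- The segment assigned to the vertex with value `i` (for cycle length `n`). -/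
noncomputable def mySeg (n : ℕ) (i : ℕ) : IPSeg :=
  if i + 2 < n then ⟨((i : ℝ), 1), ((i : ℝ) + 1, 1), Or.inl rfl, Or.inl rfl⟩
  else if i + 2 = n then ⟨((i : ℝ), 1), (0, 2), Or.inl rfl, Or.inr rfl⟩
  else ⟨(0, 1), ((n : ℝ) - 2, 2), Or.inl rfl, Or.inr rfl⟩

lemma mySeg_p2 (n i : ℕ) : (mySeg n i).p.2 = 1 := by
  unfold mySeg; split
  · rfl
  · split <;> rfl

lemma mySeg_carrier_A {n i : ℕ} (h : i + 2 < n) :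
    (mySeg n i).carrier = segment ℝ (((i : ℝ), 1) : ℝ × ℝ) ((i : ℝ) + 1, 1) := by
  unfold mySeg IPSeg.carrier; rw [if_pos h]

lemma mySeg_carrier_B {n i : ℕ} (h : i + 2 = n) :
    (mySeg n i).carrier = segment ℝ (((i : ℝ), 1) : ℝ × ℝ) (0, 2) := by
  unfold mySeg IPSeg.carrier; rw [if_neg (by omega), if_pos h]

lemma mySeg_carrier_C {n i : ℕ} (h : i + 1 = n) (hn : 3 ≤ n) :
    (mySeg n i).carrier = segment ℝ ((0, 1) : ℝ × ℝ) ((n : ℝ) - 2, 2) := by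
  unfold mySeg IPSeg.carrier; rw [if_neg (by omega), if_neg (by omega)]

lemma key (n : ℕ) (hn : 3 ≤ n) (i j : ℕ) (hij : i < j) (hj : j < n) :
    (j = i + 1 ∨ (i = 0 ∧ j + 1 = n)) ↔
      ((mySeg n i).carrier ∩ (mySeg n j).carrier).Nonempty := by
  have hi1 : (0:ℝ) ≤ (i : ℝ) := Nat.cast_nonneg i
  have hijR : (i : ℝ) < (j : ℝ) := by exact_mod_cast hij
  rcases lt_trichotomy (j + 2) n with hA | hB | hC
  · -- both intervals
    rw [mySeg_carrier_A (by omega), mySeg_carrier_A hA,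
      inter_horiz_horiz (by linarith) (by linarith)]
    constructor
    · rintro (rfl | ⟨rfl, h⟩)
      · constructor <;> push_cast <;> linarith
      · exfalso; omega
    · rintro ⟨h1, _⟩
      left
      have h1' : (j : ℝ) ≤ (i : ℝ) + 1 := h1
      have : j ≤ i + 1 := by exact_mod_cast h1'
      omega
  · -- i interval, j = n-2 perm
    rw [mySeg_carrier_A (by omega), mySeg_carrier_B hB, Set.inter_comm,
      inter_perm_horiz (by linarith)]
    constructor
    · rintro (rfl | ⟨rfl, h⟩)
      · constructor <;> push_cast <;> linarith
      · exfalso; omega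
    · rintro ⟨_, h2⟩
      left
      have h2' : (j : ℝ) ≤ (i : ℝ) + 1 := h2
      have : j ≤ i + 1 := by exact_mod_cast h2'
      omega
  · -- j = n-1 perm
    have hj1 : j + 1 = n := by omega
    rw [mySeg_carrier_C hj1 hn]
    rcases lt_trichotomy (i + 2) n with hA' | hB' | hC'
    · -- i interval
      rw [mySeg_carrier_A hA', Set.inter_comm, inter_perm_horiz (by linarith)]
      constructor
      · rintro (h | ⟨rfl, h⟩)
        · exfalso; omega
        · norm_num
      · rintro ⟨h1, _⟩
        have h1' : (i : ℝ) ≤ 0 := h1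
        have : i = 0 := by
          have hz : (i : ℝ) = 0 := le_antisymm h1' hi1
          exact_mod_cast hz
        right; exact ⟨this, hj1⟩
    · -- i = n - 2 perm: always intersect, and j = i + 1
      rw [mySeg_carrier_B hB']
      constructor
      · intro _
        have hieq : (i : ℝ) = (n : ℝ) - 2 := by
          have : ((i : ℕ) : ℝ) + 2 = (n : ℝ) := by exact_mod_cast hB'
          linarith
        refine ⟨(((i : ℝ) + 0) / 2, 3 / 2), mid_mem_perm _ _, ?_⟩
        have hm := mid_mem_perm (0 : ℝ) ((n : ℝ) - 2)
        have he : (((i : ℝ) + 0) / 2, (3:ℝ) / 2) = (((0 : ℝ) + ((n : ℝ) - 2)) / 2, (3:ℝ)/2) := by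
          rw [hieq]; norm_num
        rw [he]
        exact hm
      · intro _; left; omega
    · exfalso; omega

/-- For every `n ≥ 3`, the chordless cycle `C_n` is an IP-SEG* graph. (In particular
`C₅` is one, so IP-SEG* and IP-SEG graphs contain odd holes and are not perfect.) -/
theorem cycle_is_ipsegstar (n : ℕ) (hn : 3 ≤ n) :
    ∃ s : ZMod n → IPSeg, IsIPSEGStarModel (CycleGraph n) s := by
  have : NeZero n := ⟨by omega⟩
  have : Fact (1 < n) := ⟨by omega⟩
  refine ⟨fun v => mySeg n v.val, ?_, 1, Or.inl rfl, fun v _ => mySeg_p2 n v.val⟩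
  intro u v huv
  have hval : ∀ a b : ZMod n, a = b + 1 ↔ a.val = (b.val + 1) % n := by
    intro a b
    constructor
    · rintro rfl
      rw [ZMod.val_add, ZMod.val_one]
    · intro h
      apply ZMod.val_injective
      rw [ZMod.val_add, ZMod.val_one]
      exact h
  have hadj : (CycleGraph n).Adj u v ↔ (v = u + 1 ∨ u = v + 1) := by
    rw [CycleGraph, SimpleGraph.fromRel_adj]
    tauto
  set i := u.val with hi
  set j := v.val with hjdef
  have hiv : i < n := ZMod.val_lt u
  have hjv : j < n := ZMod.val_lt v
  have hne : i ≠ j := fun h => huv (ZMod.val_injective n h)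
  rw [hadj, hval, hval]
  show (j = (i + 1) % n ∨ i = (j + 1) % n) ↔ _
  have h1 : (i + 1) % n = if i + 1 = n then 0 else i + 1 := by
    split
    · next hh => rw [hh, Nat.mod_self]
    · exact Nat.mod_eq_of_lt (by omega)
  have h2 : (j + 1) % n = if j + 1 = n then 0 else j + 1 := by
    split
    · next hh => rw [hh, Nat.mod_self]
    · exact Nat.mod_eq_of_lt (by omega)
  rcases lt_or_gt_of_ne hne with h | h
  · rw [← key n hn i j h hjv, h1, h2]
    split <;> split <;> omega
  · rw [Set.inter_comm, ← key n hn j i h hiv, h1, h2]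
    split <;> split <;> omega
end

section
/- Let p and q be two segments of an IP-SEG model in which no two distinct segments share an endpoint, with p ≠ q. Then p ∩ q = ∅ if and only if p is to the right of q or q is to the right of p. -/
/-- `RightOf p q` means the segment `p` is to the right of the segment `q`: for each
horizontal line, every endpoint of `p` on that line has strictly larger `x`-coordinate
than every endpoint of `q` on that line (vacuously true on a line where one of them has
no endpoint). -/
def RightOf (p q : IPSeg) : Prop :=
  ∀ c : ℝ, (c = 1 ∨ c = 2) →
    ∀ e ∈ p.endpoints, ∀ f ∈ q.endpoints, e.2 = c → f.2 = c → f.1 < e.1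

namespace IPSeg

lemma mem_carrier_iff (s : IPSeg) (z : ℝ × ℝ) :
    z ∈ s.carrier ↔ ∃ t, 0 ≤ t ∧ t ≤ 1 ∧
      z.1 = (1-t)*s.p.1 + t*s.q.1 ∧ z.2 = (1-t)*s.p.2 + t*s.q.2 := by
  rw [carrier, segment_eq_image, Set.mem_image]
  constructor
  · rintro ⟨t, ⟨ht0, ht1⟩, rfl⟩
    exact ⟨t, ht0, ht1, rfl, rfl⟩
  · rintro ⟨t, ht0, ht1, hx, hy⟩
    refine ⟨t, ⟨ht0, ht1⟩, ?_⟩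
    apply Prod.ext <;> simp [hx, hy]

lemma interval_carrier (s : IPSeg) (c : ℝ) (h1 : s.p.2 = c) (h2 : s.q.2 = c) (z : ℝ × ℝ) :
    z ∈ s.carrier ↔ z.2 = c ∧ z.1 ∈ Set.uIcc s.p.1 s.q.1 := by
  rw [mem_carrier_iff, ← segment_eq_uIcc, segment_eq_image, Set.mem_image]
  constructor
  · rintro ⟨t, ht0, ht1, hx, hy⟩
    refine ⟨by rw [hy, h1, h2]; ring, t, ⟨ht0, ht1⟩, ?_⟩
    simp [hx, smul_eq_mul]
  · rintro ⟨hz2, t, ⟨ht0, ht1⟩, hx⟩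
    refine ⟨t, ht0, ht1, by simpa [smul_eq_mul] using hx.symm, ?_⟩
    rw [hz2, h1, h2]; ring

lemma perm_carrier (s : IPSeg) (h1 : s.p.2 = 1) (h2 : s.q.2 = 2) (z : ℝ × ℝ) :
    z ∈ s.carrier ↔ (1 ≤ z.2 ∧ z.2 ≤ 2) ∧ z.1 = (2 - z.2) * s.p.1 + (z.2 - 1) * s.q.1 := by
  rw [mem_carrier_iff]
  constructor
  · rintro ⟨t, ht0, ht1, hx, hy⟩
    rw [h1, h2] at hy
    have ht : t = z.2 - 1 := by linarith
    refine ⟨⟨by linarith, by linarith⟩, ?_⟩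
    rw [hx, ht]; ring
  · rintro ⟨⟨hz1, hz2⟩, hx⟩
    exact ⟨z.2 - 1, by linarith, by linarith, by rw [hx]; ring, by rw [h1, h2]; ring⟩

def Good (a b : IPSeg) : Prop :=
  a.carrier ∩ b.carrier = ∅ ↔ RightOf a b ∨ RightOf b a

def swap (s : IPSeg) : IPSeg := ⟨s.q, s.p, s.hq, s.hp⟩

lemma swap_carrier (s : IPSeg) : s.swap.carrier = s.carrier := segment_symm ℝ s.q s.p

lemma swap_endpoints (s : IPSeg) : s.swap.endpoints = s.endpoints := Set.pair_comm s.q s.p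

lemma rightOf_swap_left (a b : IPSeg) : RightOf a.swap b ↔ RightOf a b := by
  unfold RightOf; rw [swap_endpoints]

lemma rightOf_swap_right (a b : IPSeg) : RightOf a (b.swap) ↔ RightOf a b := by
  unfold RightOf; rw [swap_endpoints]

lemma good_symm (a b : IPSeg) : Good a b → Good b a := by
  unfold Good; rw [Set.inter_comm, or_comm]; exact id

lemma good_swap_left (a b : IPSeg) : Good a.swap b → Good a b := by
  unfold Good; rw [swap_carrier, rightOf_swap_left, rightOf_swap_right]; exact id

lemma good_swap_right (a b : IPSeg) : Good a b.swap → Good a b := fun h =>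
  good_symm _ _ (good_swap_left b a (good_symm _ _ h))

/-! ### real-number core lemmas -/

lemma notMem_uIcc_iff (x a b : ℝ) :
    x ∉ Set.uIcc a b ↔ (x < a ∧ x < b) ∨ (a < x ∧ b < x) := by
  rw [Set.uIcc, Set.mem_Icc]
  simp only [not_and_or, not_le, lt_min_iff, max_lt_iff]

lemma uIcc_disjoint_iff (a b c d : ℝ) :
    (∀ x ∈ Set.uIcc a b, x ∉ Set.uIcc c d) ↔
      ((c < a ∧ c < b ∧ d < a ∧ d < b) ∨ (a < c ∧ b < c ∧ a < d ∧ b < d)) := by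
  constructor
  · intro h
    by_contra hcon
    push_neg at hcon
    obtain ⟨h1, h2⟩ := hcon
    have key : ∀ x, min a b ≤ x → x ≤ max a b → min c d ≤ x → x ≤ max c d → False := by
      intro x hx1 hx2 hx3 hx4
      exact h x (by rw [Set.uIcc]; exact Set.mem_Icc.2 ⟨hx1, hx2⟩)
        (by rw [Set.uIcc]; exact Set.mem_Icc.2 ⟨hx3, hx4⟩)
    have hmm1 : min a b ≤ max c d := by
      by_contra hc; push_neg at hc
      simp only [max_lt_iff, lt_min_iff] at hc
      obtain ⟨⟨k1, k2⟩, k3, k4⟩ := hc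
      have := h1 (by linarith) (by linarith) (by linarith)
      linarith
    have hmm2 : min c d ≤ max a b := by
      by_contra hc; push_neg at hc
      simp only [max_lt_iff, lt_min_iff] at hc
      obtain ⟨⟨k1, k2⟩, k3, k4⟩ := hc
      have := h2 (by linarith) (by linarith) (by linarith)
      linarith
    exact key (max (min a b) (min c d)) (le_max_left _ _)
      (max_le (min_le_max) hmm2) (le_max_right _ _) (max_le hmm1 (min_le_max))
  · rintro (⟨h1, h2, h3, h4⟩ | ⟨h1, h2, h3, h4⟩) x hx hx' <;>
    · rw [Set.mem_uIcc] at hx hx'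
      rcases hx with ⟨_, _⟩ | ⟨_, _⟩ <;> rcases hx' with ⟨_, _⟩ | ⟨_, _⟩ <;> linarith

lemma perm_root (a1 a2 b1 b2 : ℝ) (h1 : b1 < a1) (h2 : a2 ≤ b2) :
    ∃ y, (1 ≤ y ∧ y ≤ 2) ∧ (2-y)*a1 + (y-1)*a2 = (2-y)*b1 + (y-1)*b2 := by
  have hd : (0:ℝ) < (a1 - b1) - (a2 - b2) := by linarith
  refine ⟨1 + (a1 - b1)/((a1 - b1) - (a2 - b2)), ⟨?_, ?_⟩, ?_⟩
  · have : (0:ℝ) ≤ (a1 - b1)/((a1-b1)-(a2-b2)) := div_nonneg (by linarith) hd.le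
    linarith
  · have : (a1 - b1)/((a1-b1)-(a2-b2)) ≤ 1 := by
      rw [div_le_one hd]; linarith
    linarith
  · field_simp
    ring

lemma perm_core (a1 a2 b1 b2 : ℝ)
    (h : ¬ ∃ y, (1 ≤ y ∧ y ≤ 2) ∧ (2-y)*a1 + (y-1)*a2 = (2-y)*b1 + (y-1)*b2) :
    (b1 < a1 ∧ b2 < a2) ∨ (a1 < b1 ∧ a2 < b2) := by
  by_contra hcon
  push_neg at hcon
  obtain ⟨h1, h2⟩ := hcon
  apply h
  rcases lt_trichotomy a1 b1 with hlt | heq | hgt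
  · obtain ⟨y, hy, e⟩ := perm_root b1 b2 a1 a2 hlt (h2 hlt)
    exact ⟨y, hy, e.symm⟩
  · exact ⟨1, ⟨le_refl 1, by norm_num⟩, by rw [heq]; ring⟩
  · exact perm_root a1 a2 b1 b2 hgt (h1 hgt)

/-! ### case lemmas -/

lemma good_int_int (a b : IPSeg) (ca cb : ℝ)
    (ha1 : a.p.2 = ca) (ha2 : a.q.2 = ca) (hb1 : b.p.2 = cb) (hb2 : b.q.2 = cb) :
    Good a b := by
  rcases eq_or_ne ca cb with rfl | hne
  · -- same line
    unfold Good
    have hiff : a.carrier ∩ b.carrier = ∅ ↔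
        ∀ x ∈ Set.uIcc a.p.1 a.q.1, x ∉ Set.uIcc b.p.1 b.q.1 := by
      rw [Set.eq_empty_iff_forall_notMem]
      constructor
      · intro h x hx hx'
        exact h (x, ca) ⟨(interval_carrier a ca ha1 ha2 _).2 ⟨rfl, hx⟩,
          (interval_carrier b ca hb1 hb2 _).2 ⟨rfl, hx'⟩⟩
      · rintro h z ⟨hza, hzb⟩
        rw [interval_carrier a ca ha1 ha2] at hza
        rw [interval_carrier b ca hb1 hb2] at hzb
        exact h z.1 hza.2 hzb.2
    rw [hiff, uIcc_disjoint_iff]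
    constructor
    · rintro (⟨k1, k2, k3, k4⟩ | ⟨k1, k2, k3, k4⟩)
      · left
        intro c' hc' e he f hf he2 hf2
        simp only [endpoints, Set.mem_insert_iff, Set.mem_singleton_iff] at he hf
        rcases he with rfl | rfl <;> rcases hf with rfl | rfl <;> assumption
      · right
        intro c' hc' e he f hf he2 hf2
        simp only [endpoints, Set.mem_insert_iff, Set.mem_singleton_iff] at he hf
        rcases he with rfl | rfl <;> rcases hf with rfl | rfl <;> assumption
    · rintro (hr | hr)
      · left
        exact ⟨hr ca (ha1 ▸ a.hp) a.p (Set.mem_insert _ _) b.p (Set.mem_insert _ _) ha1 hb1,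
          hr ca (ha1 ▸ a.hp) a.q (Set.mem_insert_of_mem _ rfl) b.p (Set.mem_insert _ _) ha2 hb1,
          hr ca (ha1 ▸ a.hp) a.p (Set.mem_insert _ _) b.q (Set.mem_insert_of_mem _ rfl) ha1 hb2,
          hr ca (ha1 ▸ a.hp) a.q (Set.mem_insert_of_mem _ rfl) b.q (Set.mem_insert_of_mem _ rfl) ha2 hb2⟩
      · right
        exact ⟨hr ca (hb1 ▸ b.hp) b.p (Set.mem_insert _ _) a.p (Set.mem_insert _ _) hb1 ha1,
          hr ca (hb1 ▸ b.hp) b.p (Set.mem_insert _ _) a.q (Set.mem_insert_of_mem _ rfl) hb1 ha2,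
          hr ca (hb1 ▸ b.hp) b.q (Set.mem_insert_of_mem _ rfl) a.p (Set.mem_insert _ _) hb2 ha1,
          hr ca (hb1 ▸ b.hp) b.q (Set.mem_insert_of_mem _ rfl) a.q (Set.mem_insert_of_mem _ rfl) hb2 ha2⟩
  · -- different lines: both sides true
    unfold Good
    apply iff_of_true
    · rw [Set.eq_empty_iff_forall_notMem]
      rintro z ⟨hza, hzb⟩
      rw [interval_carrier a ca ha1 ha2] at hza
      rw [interval_carrier b cb hb1 hb2] at hzb
      exact hne (hza.1 ▸ hzb.1 ▸ rfl)
    · left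
      intro c' hc' e he f hf he2 hf2
      simp only [endpoints, Set.mem_insert_iff, Set.mem_singleton_iff] at he hf
      exfalso
      apply hne
      rcases he with rfl | rfl <;> rcases hf with rfl | rfl <;>
        simp_all

lemma good_int_perm (a b : IPSeg) (ca : ℝ) (hca : ca = 1 ∨ ca = 2)
    (ha1 : a.p.2 = ca) (ha2 : a.q.2 = ca) (hbp : b.p.2 = 1) (hbq : b.q.2 = 2) :
    Good a b := by
  unfold Good
  rcases hca with rfl | rfl
  · -- interval on line 1; intersection candidate: (b.p.1, 1)
    have hiff : a.carrier ∩ b.carrier = ∅ ↔ b.p.1 ∉ Set.uIcc a.p.1 a.q.1 := by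
      rw [Set.eq_empty_iff_forall_notMem]
      constructor
      · intro h hx
        refine h (b.p.1, 1) ⟨(interval_carrier a 1 ha1 ha2 _).2 ⟨rfl, hx⟩,
          (perm_carrier b hbp hbq _).2 ⟨⟨le_refl 1, by norm_num⟩, by ring⟩⟩
      · rintro h z ⟨hza, hzb⟩
        rw [interval_carrier a 1 ha1 ha2] at hza
        rw [perm_carrier b hbp hbq] at hzb
        have hz1 : z.1 = b.p.1 := by rw [hzb.2, hza.1]; ring
        exact h (hz1 ▸ hza.2)
    rw [hiff, notMem_uIcc_iff]
    constructor
    · rintro (⟨k1, k2⟩ | ⟨k1, k2⟩)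
      · left
        intro c' hc' e he f hf he2 hf2
        simp only [endpoints, Set.mem_insert_iff, Set.mem_singleton_iff] at he hf
        rcases he with rfl | rfl <;> rcases hf with rfl | rfl <;>
          first | assumption | linarith
      · right
        intro c' hc' e he f hf he2 hf2
        simp only [endpoints, Set.mem_insert_iff, Set.mem_singleton_iff] at he hf
        rcases he with rfl | rfl <;> rcases hf with rfl | rfl <;>
          first | assumption | linarith
    · rintro (hr | hr)
      · left
        exact ⟨hr 1 (Or.inl rfl) a.p (Set.mem_insert _ _) b.p (Set.mem_insert _ _) ha1 hbp,
          hr 1 (Or.inl rfl) a.q (Set.mem_insert_of_mem _ rfl) b.p (Set.mem_insert _ _) ha2 hbp⟩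
      · right
        exact ⟨hr 1 (Or.inl rfl) b.p (Set.mem_insert _ _) a.p (Set.mem_insert _ _) hbp ha1,
          hr 1 (Or.inl rfl) b.p (Set.mem_insert _ _) a.q (Set.mem_insert_of_mem _ rfl) hbp ha2⟩
  · -- interval on line 2; intersection candidate: (b.q.1, 2)
    have hiff : a.carrier ∩ b.carrier = ∅ ↔ b.q.1 ∉ Set.uIcc a.p.1 a.q.1 := by
      rw [Set.eq_empty_iff_forall_notMem]
      constructor
      · intro h hx
        refine h (b.q.1, 2) ⟨(interval_carrier a 2 ha1 ha2 _).2 ⟨rfl, hx⟩,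
          (perm_carrier b hbp hbq _).2 ⟨⟨by norm_num, le_refl 2⟩, by ring⟩⟩
      · rintro h z ⟨hza, hzb⟩
        rw [interval_carrier a 2 ha1 ha2] at hza
        rw [perm_carrier b hbp hbq] at hzb
        have hz1 : z.1 = b.q.1 := by rw [hzb.2, hza.1]; ring
        exact h (hz1 ▸ hza.2)
    rw [hiff, notMem_uIcc_iff]
    constructor
    · rintro (⟨k1, k2⟩ | ⟨k1, k2⟩)
      · left
        intro c' hc' e he f hf he2 hf2
        simp only [endpoints, Set.mem_insert_iff, Set.mem_singleton_iff] at he hf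
        rcases he with rfl | rfl <;> rcases hf with rfl | rfl <;>
          first | assumption | linarith
      · right
        intro c' hc' e he f hf he2 hf2
        simp only [endpoints, Set.mem_insert_iff, Set.mem_singleton_iff] at he hf
        rcases he with rfl | rfl <;> rcases hf with rfl | rfl <;>
          first | assumption | linarith
    · rintro (hr | hr)
      · left
        exact ⟨hr 2 (Or.inr rfl) a.p (Set.mem_insert _ _) b.q (Set.mem_insert_of_mem _ rfl) ha1 hbq,
          hr 2 (Or.inr rfl) a.q (Set.mem_insert_of_mem _ rfl) b.q (Set.mem_insert_of_mem _ rfl) ha2 hbq⟩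
      · right
        exact ⟨hr 2 (Or.inr rfl) b.q (Set.mem_insert_of_mem _ rfl) a.p (Set.mem_insert _ _) hbq ha1,
          hr 2 (Or.inr rfl) b.q (Set.mem_insert_of_mem _ rfl) a.q (Set.mem_insert_of_mem _ rfl) hbq ha2⟩

lemma good_perm_perm (a b : IPSeg) (hap : a.p.2 = 1) (haq : a.q.2 = 2)
    (hbp : b.p.2 = 1) (hbq : b.q.2 = 2) : Good a b := by
  unfold Good
  constructor
  · intro hdis
    have hne : ¬ ∃ y, (1 ≤ y ∧ y ≤ 2) ∧
        (2-y)*a.p.1 + (y-1)*a.q.1 = (2-y)*b.p.1 + (y-1)*b.q.1 := by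
      rintro ⟨y, ⟨hy1, hy2⟩, heq⟩
      have hz : ((2-y)*a.p.1 + (y-1)*a.q.1, y) ∈ a.carrier ∩ b.carrier :=
        ⟨(perm_carrier a hap haq _).2 ⟨⟨hy1, hy2⟩, rfl⟩,
         (perm_carrier b hbp hbq _).2 ⟨⟨hy1, hy2⟩, heq⟩⟩
      rw [hdis] at hz
      exact hz
    rcases perm_core _ _ _ _ hne with ⟨k1, k2⟩ | ⟨k1, k2⟩
    · left
      intro c' hc' e he f hf he2 hf2
      simp only [endpoints, Set.mem_insert_iff, Set.mem_singleton_iff] at he hf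
      rcases he with rfl | rfl <;> rcases hf with rfl | rfl <;>
        first | assumption | linarith
    · right
      intro c' hc' e he f hf he2 hf2
      simp only [endpoints, Set.mem_insert_iff, Set.mem_singleton_iff] at he hf
      rcases he with rfl | rfl <;> rcases hf with rfl | rfl <;>
        first | assumption | linarith
  · intro hr
    have key : ∀ p1 p2 q1 q2 : ℝ, q1 < p1 → q2 < p2 →
        ∀ z : ℝ × ℝ, (1 ≤ z.2 ∧ z.2 ≤ 2) → z.1 = (2 - z.2) * p1 + (z.2 - 1) * p2 →
          z.1 = (2 - z.2) * q1 + (z.2 - 1) * q2 → False := by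
      intro p1 p2 q1 q2 hq1 hq2 z ⟨hy1, hy2⟩ h1 h2
      have e0 : (2 - z.2)*(p1 - q1) + (z.2 - 1)*(p2 - q2) = 0 := by
        linear_combination h2 - h1
      have t1 : (0:ℝ) ≤ (2 - z.2)*(p1 - q1) :=
        mul_nonneg (by linarith) (by linarith)
      have t2 : (0:ℝ) ≤ (z.2 - 1)*(p2 - q2) :=
        mul_nonneg (by linarith) (by linarith)
      have ht1 : (2 - z.2)*(p1 - q1) = 0 := by linarith
      rcases mul_eq_zero.1 ht1 with h | h
      · have hz2 : z.2 = 2 := by linarith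
        rw [hz2] at e0
        nlinarith
      · linarith
    rcases hr with hr | hr
    · have k1 : b.p.1 < a.p.1 :=
        hr 1 (Or.inl rfl) a.p (Set.mem_insert _ _) b.p (Set.mem_insert _ _) hap hbp
      have k2 : b.q.1 < a.q.1 :=
        hr 2 (Or.inr rfl) a.q (Set.mem_insert_of_mem _ rfl) b.q (Set.mem_insert_of_mem _ rfl) haq hbq
      rw [Set.eq_empty_iff_forall_notMem]
      rintro z ⟨hza, hzb⟩
      rw [perm_carrier a hap haq] at hza
      rw [perm_carrier b hbp hbq] at hzb
      exact key _ _ _ _ k1 k2 z hza.1 hza.2 hzb.2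
    · have k1 : a.p.1 < b.p.1 :=
        hr 1 (Or.inl rfl) b.p (Set.mem_insert _ _) a.p (Set.mem_insert _ _) hbp hap
      have k2 : a.q.1 < b.q.1 :=
        hr 2 (Or.inr rfl) b.q (Set.mem_insert_of_mem _ rfl) a.q (Set.mem_insert_of_mem _ rfl) hbq haq
      rw [Set.eq_empty_iff_forall_notMem]
      rintro z ⟨hza, hzb⟩
      rw [perm_carrier a hap haq] at hza
      rw [perm_carrier b hbp hbq] at hzb
      exact key _ _ _ _ k1 k2 z hzb.1 hzb.2 hza.2

lemma good_norm (a b : IPSeg)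
    (ha : a.p.2 = a.q.2 ∨ (a.p.2 = 1 ∧ a.q.2 = 2))
    (hb : b.p.2 = b.q.2 ∨ (b.p.2 = 1 ∧ b.q.2 = 2)) : Good a b := by
  rcases ha with ha | ⟨ha1, ha2⟩ <;> rcases hb with hb | ⟨hb1, hb2⟩
  · exact good_int_int a b a.p.2 b.p.2 rfl ha.symm rfl hb.symm
  · exact good_int_perm a b a.p.2 a.hp rfl ha.symm hb1 hb2
  · exact good_symm _ _ (good_int_perm b a b.p.2 b.hp rfl hb.symm ha1 ha2)
  · exact good_perm_perm a b ha1 ha2 hb1 hb2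

lemma good (a b : IPSeg) : Good a b := by
  have key : ∀ s : IPSeg, (s.p.2 = s.q.2 ∨ (s.p.2 = 1 ∧ s.q.2 = 2)) ∨
      (s.swap.p.2 = s.swap.q.2 ∨ (s.swap.p.2 = 1 ∧ s.swap.q.2 = 2)) := by
    intro s
    rcases s.hp with h1 | h1 <;> rcases s.hq with h2 | h2 <;> simp [swap, h1, h2]
  rcases key a with ha | ha <;> rcases key b with hb | hb
  · exact good_norm a b ha hb
  · exact good_swap_right a b (good_norm a b.swap ha hb)
  · exact good_swap_left a b (good_norm a.swap b ha hb)
  · exact good_swap_left a b (good_swap_right a.swap b (good_norm a.swap b.swap ha hb))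

end IPSeg

/-- In an IP-SEG model in which no two segments of distinct vertices share an endpoint,
two segments of distinct vertices are disjoint iff one of them is to the right of
the other. -/
theorem disjoint_iff_rightOf {V : Type} (G : SimpleGraph V) (s : V → IPSeg)
    (hm : IsIPSEGModel G s)
    (hshare : ∀ u v : V, u ≠ v → ∀ e ∈ (s u).endpoints, e ∉ (s v).endpoints)
    (u v : V) (huv : u ≠ v) :
    (s u).carrier ∩ (s v).carrier = ∅ ↔ RightOf (s u) (s v) ∨ RightOf (s v) (s u) := by
  exact IPSeg.good (s u) (s v)
end
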